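/- arXiv:2112.03075 — 5 statements merged into one kernel-verified Lean document; each statement's English description precedes it below -/
import Mathlib

section
/- Let Y ~ F have finite first moment and τ ∈ (0,1). Then the lower expected shortfall satisfies ES⁻_τ(F) = −(1/τ)·min over v ∈ ℝ of E[S⁻_τ(Y;v)], and the upper expected shortfall satisfies ES⁺_τ(F) = (1/(1−τ))·min over v ∈ ℝ of E[S⁺_τ(Y;v)]. -/
open MeasureTheory

noncomputable def Sminus (τ y a : ℝ) : ℝ :=
  ((if y ≤ a then (1:ℝ) else 0) - τ) * a - (if y ≤ a then (1:ℝ) else 0) * y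

noncomputable def Splus (τ y a : ℝ) : ℝ :=
  (1 - τ - (if a < y then (1:ℝ) else 0)) * a + (if a < y then (1:ℝ) else 0) * y

/-- Left-continuous generalized inverse of the CDF of μ. -/
noncomputable def genInv (μ : Measure ℝ) (p : ℝ) : ℝ :=
  sInf {x : ℝ | p ≤ (μ (Set.Iic x)).toReal}

/-- Lower expected shortfall at level τ. -/
noncomputable def ESminus (μ : Measure ℝ) (τ : ℝ) : ℝ :=
  (1 / τ) * ∫ p in Set.Ioc (0:ℝ) τ, genInv μ p

/-- Upper expected shortfall at level τ. -/
noncomputable def ESplus (μ : Measure ℝ) (τ : ℝ) : ℝ :=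
  (1 / (1 - τ)) * ∫ p in Set.Ioc τ (1:ℝ), genInv μ p

section ESaux

open Set Filter ProbabilityTheory
open scoped Topology

set_option linter.unusedSectionVars false

variable (μ : Measure ℝ) [IsProbabilityMeasure μ]

lemma genInv_eq (p : ℝ) : genInv μ p = sInf {x | p ≤ cdf μ x} := by
  unfold genInv; congr 1; ext x
  simp only [Set.mem_setOf_eq, cdf_eq_real, measureReal_def]

lemma nonempty_setcdf {p : ℝ} (hp : p < 1) : {x | p ≤ cdf μ x}.Nonempty := by
  obtain ⟨x, hx⟩ := ((tendsto_cdf_atTop μ).eventually_const_le hp).exists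
  exact ⟨x, hx⟩

lemma bddBelow_setcdf {p : ℝ} (hp : 0 < p) : BddBelow {x | p ≤ cdf μ x} := by
  have h := (tendsto_cdf_atBot μ).eventually_lt_const hp
  rw [eventually_atBot] at h
  obtain ⟨x₀, hx₀⟩ := h
  refine ⟨x₀, fun y hy => ?_⟩
  by_contra hlt
  push_neg at hlt
  exact absurd hy (not_le.mpr (hx₀ y hlt.le))

lemma cdf_genInv_ge {p : ℝ} (hp0 : 0 < p) (hp1 : p < 1) : p ≤ cdf μ (genInv μ p) := by
  rw [genInv_eq]
  set S := {x | p ≤ cdf μ x} with hS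
  have hne := nonempty_setcdf μ hp1
  have hbd := bddBelow_setcdf μ hp0
  have hrc : ContinuousWithinAt (cdf μ) (Ici (sInf S)) (sInf S) := (cdf μ).right_continuous _
  have key : ∀ ε > 0, p ≤ cdf μ (sInf S + ε) := by
    intro ε hε
    obtain ⟨z, hz, hzlt⟩ := (csInf_lt_iff hbd hne).mp (by linarith : sInf S < sInf S + ε)
    exact le_trans hz (monotone_cdf μ hzlt.le)
  have hseq : Tendsto (fun n : ℕ => sInf S + 1/(n+1)) atTop (𝓝[Ici (sInf S)] (sInf S)) := by
    rw [tendsto_nhdsWithin_iff]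
    constructor
    · have : Tendsto (fun n : ℕ => 1/((n:ℝ)+1)) atTop (𝓝 0) := tendsto_one_div_add_atTop_nhds_zero_nat
      simpa using this.const_add (sInf S)
    · refine Eventually.of_forall (fun n => ?_)
      have : (0:ℝ) < 1/((n:ℝ)+1) := by positivity
      simp [mem_Ici]; linarith
  have := hrc.tendsto.comp hseq
  refine ge_of_tendsto' this (fun n => ?_)
  exact key _ (by positivity)

lemma genInv_le_iff {p x : ℝ} (hp0 : 0 < p) (hp1 : p < 1) :
    genInv μ p ≤ x ↔ p ≤ cdf μ x := by
  constructor
  · intro h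
    exact le_trans (cdf_genInv_ge μ hp0 hp1) (monotone_cdf μ h)
  · intro h
    rw [genInv_eq]
    exact csInf_le (bddBelow_setcdf μ hp0) h

lemma genInv_mono {p p' : ℝ} (h0 : 0 < p) (h : p ≤ p') (h1 : p' < 1) :
    genInv μ p ≤ genInv μ p' := by
  rw [genInv_le_iff μ h0 (lt_of_le_of_lt h h1)]
  exact le_trans h (cdf_genInv_ge μ (lt_of_lt_of_le h0 h) h1)

/-- Measurable modification of `genInv μ` supported on `Ioo 0 1`. -/
noncomputable def gq : ℝ → ℝ := (Ioo (0:ℝ) 1).indicator (genInv μ)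

lemma gq_eq {p : ℝ} (hp : p ∈ Ioo (0:ℝ) 1) : gq μ p = genInv μ p :=
  indicator_of_mem hp _

lemma measurable_gq : Measurable (gq μ) := by
  apply measurable_of_Iic
  intro x
  have : gq μ ⁻¹' Iic x =
      (Ioo (0:ℝ) 1 ∩ Iic (cdf μ x)) ∪ ((Ioo (0:ℝ) 1)ᶜ ∩ {p : ℝ | (0:ℝ) ≤ x}) := by
    ext p
    simp only [mem_preimage, mem_Iic, mem_union, mem_inter_iff, mem_compl_iff, mem_setOf_eq]
    by_cases hp : p ∈ Ioo (0:ℝ) 1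
    · rw [gq_eq μ hp]
      simp only [hp, true_and, not_true_eq_false, false_and, or_false]
      exact genInv_le_iff μ hp.1 hp.2
    · unfold gq
      rw [indicator_of_notMem hp]
      simp [hp]
  rw [this]
  have h2 : MeasurableSet {p : ℝ | (0:ℝ) ≤ x} := by
    by_cases h : (0:ℝ) ≤ x
    · simp [h]
    · simp [h]
  exact ((measurableSet_Ioo.inter measurableSet_Iic).union
    (measurableSet_Ioo.compl.inter h2))

lemma map_gq : Measure.map (gq μ) (volume.restrict (Ioc (0:ℝ) 1)) = μ := by
  refine Measure.ext_of_Iic _ _ (fun x => ?_)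
  rw [Measure.map_apply (measurable_gq μ) measurableSet_Iic, Measure.restrict_apply
    (measurable_gq μ measurableSet_Iic)]
  have hae : (gq μ ⁻¹' Iic x ∩ Ioc 0 1 : Set ℝ) =ᵐ[volume] (Ioc (0:ℝ) (cdf μ x)) := by
    rw [Filter.eventuallyEq_set]
    have h1 : ∀ᵐ p : ℝ ∂volume, p ≠ 1 := by
      rw [ae_iff]
      simpa using (by simp : volume ({p : ℝ | ¬ p ≠ 1}) = volume ({1} : Set ℝ)) ▸
        Real.volume_singleton
    filter_upwards [h1] with p hp1
    constructor
    · rintro ⟨hgx, hp0, hple⟩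
      have hp : p ∈ Ioo (0:ℝ) 1 := ⟨hp0, lt_of_le_of_ne hple hp1⟩
      rw [mem_preimage, mem_Iic, gq_eq μ hp, genInv_le_iff μ hp.1 hp.2] at hgx
      exact ⟨hp0, hgx⟩
    · rintro ⟨hp0, hple⟩
      have hle1 : p ≤ 1 := le_trans hple (cdf_le_one μ x)
      have hp : p ∈ Ioo (0:ℝ) 1 := ⟨hp0, lt_of_le_of_ne hle1 hp1⟩
      refine ⟨?_, hp0, hle1⟩
      rw [mem_preimage, mem_Iic, gq_eq μ hp, genInv_le_iff μ hp.1 hp.2]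
      exact hple
  rw [measure_congr hae, Real.volume_Ioc, sub_zero, ofReal_cdf]

lemma Splus_eq_Sminus_add (τ y v : ℝ) : Splus τ y v = Sminus τ y v + y := by
  unfold Splus Sminus
  rcases le_or_gt y v with h | h
  · rw [if_pos h, if_neg (not_lt.mpr h)]; ring
  · rw [if_neg (not_le.mpr h), if_pos h]; ring

lemma Sminus_eq_indicator (τ v y : ℝ) :
    Sminus τ y v = (Iic v).indicator (fun z => v - z) y - τ * v := by
  unfold Sminus
  rcases le_or_gt y v with h | h
  · rw [if_pos h, indicator_of_mem (mem_Iic.mpr h)]; ring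
  · rw [if_neg (not_le.mpr h), indicator_of_notMem (by simpa using h)]; ring

lemma Sminus_key (τ v q y p : ℝ) (h1 : p ≤ τ → y ≤ q) (h2 : τ < p → y ≤ q → y = q) :
    ((if p ≤ τ then (1:ℝ) else 0) - τ) * (v - q) ≤ Sminus τ y v - Sminus τ y q := by
  unfold Sminus
  rcases le_or_gt p τ with hc | hc
  · have hb := h1 hc
    rw [if_pos hc, if_pos hb]
    rcases le_or_gt y v with ha | ha
    · rw [if_pos ha]; ring_nf; nlinarith [ha, hb]
    · rw [if_neg (not_le.mpr ha)]; nlinarith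
  · rw [if_neg (not_le.mpr hc)]
    rcases le_or_gt y q with hb | hb
    · have hyq := h2 hc hb
      subst hyq
      rw [if_pos le_rfl]
      rcases le_or_gt y v with ha | ha
      · rw [if_pos ha]; nlinarith
      · rw [if_neg (not_le.mpr ha)]; nlinarith
    · rw [if_neg (not_le.mpr hb)]
      rcases le_or_gt y v with ha | ha
      · rw [if_pos ha]; nlinarith
      · rw [if_neg (not_le.mpr ha)]; nlinarith

end ESaux

theorem ES_as_min_of_scores (μ : Measure ℝ) [IsProbabilityMeasure μ]
    (hY : Integrable (fun y : ℝ => y) μ) (τ : ℝ) (hτ : τ ∈ Set.Ioo (0:ℝ) 1) :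
    (∃ v₀ : ℝ, (∀ v : ℝ, ∫ y, Sminus τ y v₀ ∂μ ≤ ∫ y, Sminus τ y v ∂μ) ∧
      ESminus μ τ = -(1 / τ) * ∫ y, Sminus τ y v₀ ∂μ) ∧
    (∃ v₁ : ℝ, (∀ v : ℝ, ∫ y, Splus τ y v₁ ∂μ ≤ ∫ y, Splus τ y v ∂μ) ∧
      ESplus μ τ = (1 / (1 - τ)) * ∫ y, Splus τ y v₁ ∂μ) := by
  open Set Filter ProbabilityTheory in
  obtain ⟨hτ0, hτ1⟩ := hτ
  set ν : Measure ℝ := volume.restrict (Set.Ioc (0:ℝ) 1) with hν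
  set q : ℝ := genInv μ τ with hqdef
  set Fq : ℝ := cdf μ q with hFqdef
  have hq : τ ≤ Fq := cdf_genInv_ge μ hτ0 hτ1
  have hFq1 : Fq ≤ 1 := cdf_le_one μ q
  have hprobν : IsProbabilityMeasure ν := by
    constructor
    rw [hν, Measure.restrict_apply_univ, Real.volume_Ioc]
    norm_num
  -- ae membership facts
  have hIoo : ∀ᵐ p ∂ν, p ∈ Set.Ioo (0:ℝ) 1 := by
    have h1 : ∀ᵐ p ∂ν, p ≠ 1 := by
      rw [ae_iff]
      refine measure_mono_null (t := ({1} : Set ℝ)) (fun p hp => ?_) ?_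
      · simp only [Set.mem_setOf_eq, not_not] at hp
        exact Set.mem_singleton_iff.mpr hp
      · rw [hν, Measure.restrict_apply (measurableSet_singleton 1)]
        exact measure_mono_null Set.inter_subset_left Real.volume_singleton
    have h2 : ∀ᵐ p ∂ν, p ∈ Set.Ioc (0:ℝ) 1 := ae_restrict_mem measurableSet_Ioc
    filter_upwards [h1, h2] with p hp1 hp2
    exact ⟨hp2.1, lt_of_le_of_ne hp2.2 hp1⟩
  -- integrability of gq
  have hmapY : AEStronglyMeasurable (fun y : ℝ => y) (Measure.map (gq μ) ν) := by
    rw [hν, map_gq μ]; exact hY.aestronglyMeasurable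
  have hg_int : Integrable (gq μ) ν := by
    have h := (integrable_map_measure hmapY (measurable_gq μ).aemeasurable).mp
      (by rw [hν, map_gq μ]; exact hY)
    simpa [Function.comp_def] using h
  -- integrability of Sminus
  have hSm_int : ∀ v : ℝ, Integrable (fun y => Sminus τ y v) μ := by
    intro v
    have h : Integrable (fun y => (Set.Iic v).indicator (fun z => v - z) y - τ * v) μ :=
      (((integrable_const v).sub hY).indicator measurableSet_Iic).sub (integrable_const _)
    refine h.congr (Filter.Eventually.of_forall (fun y => ?_))
    simp only
    rw [Sminus_eq_indicator]
  -- transfer to ν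
  have hSm_comp_int : ∀ v : ℝ, Integrable (fun p => Sminus τ (gq μ p) v) ν := by
    intro v
    have hms : AEStronglyMeasurable (fun y => Sminus τ y v) (Measure.map (gq μ) ν) := by
      rw [hν, map_gq μ]; exact (hSm_int v).aestronglyMeasurable
    have h := (integrable_map_measure hms (measurable_gq μ).aemeasurable).mp
      (by rw [hν, map_gq μ]; exact hSm_int v)
    simpa [Function.comp_def] using h
  have hSm_comp : ∀ v : ℝ, ∫ y, Sminus τ y v ∂μ = ∫ p, Sminus τ (gq μ p) v ∂ν := by
    intro v
    have hms : AEStronglyMeasurable (fun y => Sminus τ y v) (Measure.map (gq μ) ν) := by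
      rw [hν, map_gq μ]; exact (hSm_int v).aestronglyMeasurable
    rw [← integral_map (measurable_gq μ).aemeasurable hms, hν, map_gq μ]
  -- ∫ of the lower-bound auxiliary function is 0
  have haux_int : Integrable (fun p => (if p ≤ τ then (1:ℝ) else 0) - τ) ν := by
    have h : Integrable (fun p => (Set.Iic τ).indicator (fun _ => (1:ℝ)) p - τ) ν :=
      ((integrable_const (1:ℝ)).indicator measurableSet_Iic).sub (integrable_const τ)
    refine h.congr (Filter.Eventually.of_forall (fun p => ?_))
    by_cases hp : p ≤ τ
    · simp [hp, Set.indicator_of_mem (Set.mem_Iic.mpr hp)]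
    · simp [hp, Set.indicator_of_notMem (by simpa using hp : p ∉ Set.Iic τ)]
  have haux_val : ∫ p, ((if p ≤ τ then (1:ℝ) else 0) - τ) ∂ν = 0 := by
    have h1 : ∫ p, ((Set.Iic τ).indicator (fun _ => (1:ℝ)) p - τ) ∂ν
        = (∫ p, (Set.Iic τ).indicator (fun _ => (1:ℝ)) p ∂ν) - ∫ _, τ ∂ν :=
      integral_sub ((integrable_const (1:ℝ)).indicator measurableSet_Iic) (integrable_const τ)
    have h2 : ∫ p, (Set.Iic τ).indicator (fun _ => (1:ℝ)) p ∂ν = (ν (Set.Iic τ)).toReal • (1:ℝ) :=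
      integral_indicator_const _ measurableSet_Iic
    have h3 : ν (Set.Iic τ) = ENNReal.ofReal τ := by
      rw [hν, Measure.restrict_apply measurableSet_Iic]
      have : Set.Iic τ ∩ Set.Ioc (0:ℝ) 1 = Set.Ioc 0 τ := by
        ext p
        simp only [Set.mem_inter_iff, Set.mem_Iic, Set.mem_Ioc]
        constructor
        · rintro ⟨h, h0, _⟩; exact ⟨h0, h⟩
        · rintro ⟨h0, h⟩; exact ⟨h, h0, le_trans h hτ1.le⟩
      rw [this, Real.volume_Ioc, sub_zero]
    have h4 : ∫ _, τ ∂ν = τ := by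
      rw [integral_const, probReal_univ]; simp
    have heq : ∫ p, ((if p ≤ τ then (1:ℝ) else 0) - τ) ∂ν
        = ∫ p, ((Set.Iic τ).indicator (fun _ => (1:ℝ)) p - τ) ∂ν := by
      refine integral_congr_ae (Filter.Eventually.of_forall (fun p => ?_))
      by_cases hp : p ≤ τ
      · simp [hp, Set.indicator_of_mem (Set.mem_Iic.mpr hp)]
      · simp [hp, Set.indicator_of_notMem (by simpa using hp : p ∉ Set.Iic τ)]
    rw [heq, h1, h2, h3, h4, ENNReal.toReal_ofReal hτ0.le]
    simp
  -- minimality of q for Sminus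
  have hmin : ∀ v : ℝ, ∫ y, Sminus τ y q ∂μ ≤ ∫ y, Sminus τ y v ∂μ := by
    intro v
    rw [hSm_comp q, hSm_comp v]
    have hlow : ∀ᵐ p ∂ν, ((if p ≤ τ then (1:ℝ) else 0) - τ) * (v - q)
        ≤ Sminus τ (gq μ p) v - Sminus τ (gq μ p) q := by
      filter_upwards [hIoo] with p hp
      refine Sminus_key τ v q (gq μ p) p (fun hpt => ?_) (fun hpt hle => ?_)
      · rw [gq_eq μ hp]; exact genInv_mono μ hp.1 hpt hτ1
      · rw [gq_eq μ hp] at hle ⊢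
        exact le_antisymm hle (genInv_mono μ hτ0 hpt.le hp.2)
    have hsub : Integrable (fun p => Sminus τ (gq μ p) v - Sminus τ (gq μ p) q) ν :=
      (hSm_comp_int v).sub (hSm_comp_int q)
    have h0 : (0:ℝ) ≤ ∫ p, (Sminus τ (gq μ p) v - Sminus τ (gq μ p) q) ∂ν := by
      have hlhs : ∫ p, ((if p ≤ τ then (1:ℝ) else 0) - τ) * (v - q) ∂ν = 0 := by
        rw [integral_mul_const, haux_val, zero_mul]
      calc (0:ℝ) = ∫ p, ((if p ≤ τ then (1:ℝ) else 0) - τ) * (v - q) ∂ν := hlhs.symm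
        _ ≤ _ := integral_mono_ae (haux_int.mul_const _) hsub hlow
    rw [integral_sub (hSm_comp_int v) (hSm_comp_int q)] at h0
    linarith
  -- ae fact wrt volume: p ≠ 1
  have hvol1 : ∀ᵐ p : ℝ ∂(volume : Measure ℝ), p ≠ 1 := by
    rw [ae_iff]
    refine measure_mono_null (t := ({1} : Set ℝ)) (fun p hp => ?_) Real.volume_singleton
    simp only [Set.mem_setOf_eq, not_not] at hp
    exact Set.mem_singleton_iff.mpr hp
  -- restricted integrability of gq
  have hg_int_sub : ∀ s : Set ℝ, s ⊆ Set.Ioc (0:ℝ) 1 → Integrable (gq μ) (volume.restrict s) :=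
    fun s hs => hg_int.mono_measure (Measure.restrict_mono hs le_rfl)
  -- value of  ∫ Sminus at q
  have hIq : ∫ p, Sminus τ (gq μ p) q ∂ν = -(∫ p in Set.Ioc (0:ℝ) τ, gq μ p) := by
    -- step 1: rewrite integrand a.e.
    have hstep1 : ∫ p, Sminus τ (gq μ p) q ∂ν
        = ∫ p, ((Set.Iic Fq).indicator (fun p' => q - gq μ p') p - τ * q) ∂ν := by
      refine integral_congr_ae ?_
      filter_upwards [hIoo] with p hp
      have hiff : gq μ p ≤ q ↔ p ≤ Fq := by
        rw [gq_eq μ hp]; exact genInv_le_iff μ hp.1 hp.2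
      unfold Sminus
      by_cases hple : p ≤ Fq
      · rw [if_pos (hiff.mpr hple), Set.indicator_of_mem (Set.mem_Iic.mpr hple)]
        ring
      · rw [if_neg (fun h => hple (hiff.mp h)),
          Set.indicator_of_notMem (by simpa using hple : p ∉ Set.Iic Fq)]
        ring
    have hind_int : Integrable (fun p => (Set.Iic Fq).indicator (fun p' => q - gq μ p') p) ν :=
      ((integrable_const q).sub hg_int).indicator measurableSet_Iic
    have hstep2 : ∫ p, ((Set.Iic Fq).indicator (fun p' => q - gq μ p') p - τ * q) ∂ν
        = (∫ p, (Set.Iic Fq).indicator (fun p' => q - gq μ p') p ∂ν) - τ * q := by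
      rw [integral_sub hind_int (integrable_const _), integral_const, probReal_univ]
      simp
    -- step 3: indicator integral to set integral over Ioc 0 Fq
    have hsetEq : Set.Iic Fq ∩ Set.Ioc (0:ℝ) 1 = Set.Ioc (0:ℝ) Fq := by
      ext p
      simp only [Set.mem_inter_iff, Set.mem_Iic, Set.mem_Ioc]
      constructor
      · rintro ⟨h, h0, _⟩; exact ⟨h0, h⟩
      · rintro ⟨h0, h⟩; exact ⟨h, h0, le_trans h hFq1⟩
    have hstep3 : ∫ p, (Set.Iic Fq).indicator (fun p' => q - gq μ p') p ∂ν
        = ∫ p in Set.Ioc (0:ℝ) Fq, (q - gq μ p) := by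
      rw [integral_indicator measurableSet_Iic, hν, Measure.restrict_restrict measurableSet_Iic,
        hsetEq]
    -- step 4
    have hFq0 : (0:ℝ) ≤ Fq := le_trans hτ0.le hq
    have hint_IocFq : Integrable (gq μ) (volume.restrict (Set.Ioc (0:ℝ) Fq)) :=
      hg_int_sub _ (Set.Ioc_subset_Ioc le_rfl hFq1)
    have hstep4 : ∫ p in Set.Ioc (0:ℝ) Fq, (q - gq μ p) = Fq * q - ∫ p in Set.Ioc (0:ℝ) Fq, gq μ p := by
      rw [integral_sub (integrable_const q) hint_IocFq, setIntegral_const, Real.volume_real_Ioc_of_le hFq0,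
        sub_zero, smul_eq_mul]
    -- step 5: split Ioc 0 Fq
    have hstep5 : ∫ p in Set.Ioc (0:ℝ) Fq, gq μ p
        = (∫ p in Set.Ioc (0:ℝ) τ, gq μ p) + ∫ p in Set.Ioc τ Fq, gq μ p := by
      rw [← setIntegral_union (Set.Ioc_disjoint_Ioc_of_le le_rfl) measurableSet_Ioc
        (hg_int_sub _ (Set.Ioc_subset_Ioc le_rfl hτ1.le))
        (hg_int_sub _ (Set.Ioc_subset_Ioc hτ0.le hFq1)),
        Set.Ioc_union_Ioc_eq_Ioc hτ0.le hq]
    -- step 6: on Ioc τ Fq, gq = q a.e.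
    have hstep6 : ∫ p in Set.Ioc τ Fq, gq μ p = (Fq - τ) * q := by
      have hcongr : ∫ p in Set.Ioc τ Fq, gq μ p = ∫ _ in Set.Ioc τ Fq, q := by
        refine setIntegral_congr_ae measurableSet_Ioc ?_
        filter_upwards [hvol1] with p hp1 hp
        have hplt1 : p < 1 := lt_of_le_of_ne (le_trans hp.2 hFq1) hp1
        have hpIoo : p ∈ Set.Ioo (0:ℝ) 1 := ⟨lt_trans hτ0 hp.1, hplt1⟩
        rw [gq_eq μ hpIoo]
        refine le_antisymm ?_ ?_
        · exact (genInv_le_iff μ hpIoo.1 hpIoo.2).mpr hp.2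
        · exact genInv_mono μ hτ0 hp.1.le hpIoo.2
      rw [hcongr, setIntegral_const, Real.volume_real_Ioc_of_le hq, smul_eq_mul]
    rw [hstep1, hstep2, hstep3, hstep4, hstep5, hstep6]
    ring
  -- gq = genInv on Ioc 0 τ
  have hgen_minus : ∫ p in Set.Ioc (0:ℝ) τ, gq μ p = ∫ p in Set.Ioc (0:ℝ) τ, genInv μ p := by
    refine setIntegral_congr_fun measurableSet_Ioc (fun p hp => ?_)
    exact gq_eq μ ⟨hp.1, lt_of_le_of_lt hp.2 hτ1⟩
  -- ESminus identity
  have hESm : ESminus μ τ = -(1 / τ) * ∫ y, Sminus τ y q ∂μ := by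
    rw [ESminus, ← hgen_minus, hSm_comp q, hIq]
    ring
  -- Splus relation
  have hSp : ∀ v : ℝ, ∫ y, Splus τ y v ∂μ = (∫ y, Sminus τ y v ∂μ) + ∫ y, y ∂μ := by
    intro v
    rw [← integral_add (hSm_int v) hY]
    refine integral_congr_ae (Filter.Eventually.of_forall (fun y => ?_))
    exact Splus_eq_Sminus_add τ y v
  have hminp : ∀ v : ℝ, ∫ y, Splus τ y q ∂μ ≤ ∫ y, Splus τ y v ∂μ := by
    intro v
    rw [hSp q, hSp v]
    linarith [hmin v]
  -- E[Y] via gq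
  have hEY : ∫ y, y ∂μ = ∫ p, gq μ p ∂ν := by
    rw [← integral_map (measurable_gq μ).aemeasurable hmapY, hν, map_gq μ]
  have hsplit01 : ∫ p, gq μ p ∂ν
      = (∫ p in Set.Ioc (0:ℝ) τ, gq μ p) + ∫ p in Set.Ioc τ 1, gq μ p := by
    rw [hν, ← setIntegral_union (Set.Ioc_disjoint_Ioc_of_le le_rfl) measurableSet_Ioc
      (hg_int_sub _ (Set.Ioc_subset_Ioc le_rfl hτ1.le))
      (hg_int_sub _ (Set.Ioc_subset_Ioc hτ0.le le_rfl)),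
      Set.Ioc_union_Ioc_eq_Ioc hτ0.le hτ1.le]
  have hgen_plus : ∫ p in Set.Ioc τ 1, gq μ p = ∫ p in Set.Ioc τ 1, genInv μ p := by
    refine setIntegral_congr_ae measurableSet_Ioc ?_
    filter_upwards [hvol1] with p hp1 hp
    exact gq_eq μ ⟨lt_trans hτ0 hp.1, lt_of_le_of_ne hp.2 hp1⟩
  have hESp : ESplus μ τ = (1 / (1 - τ)) * ∫ y, Splus τ y q ∂μ := by
    rw [ESplus, hSp q, hSm_comp q, hIq, hEY, hsplit01, ← hgen_plus]
    ring
  exact ⟨⟨q, hmin, hESm⟩, ⟨q, hminp, hESp⟩⟩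
end

section
/- Let φ: I → ℝ be convex on an interval I with subgradient φ′, and define the Bregman divergence L_φ(y;a) = φ(y) − φ(a) − φ′(a)(y−a). Then for any random variable Y supported in I with E[|Y|] < ∞ and E[|φ(Y)|] < ∞, and any a, μ ∈ I with μ = E[Y], one has E[L_φ(Y;μ)] ≤ E[L_φ(Y;a)]. If φ is strictly convex, equality implies a = μ. -/
open MeasureTheory

/-- Bregman divergence of φ with subgradient selection φ'. -/
noncomputable def bregman (φ φ' : ℝ → ℝ) (y a : ℝ) : ℝ :=
  φ y - φ a - φ' a * (y - a)

theorem bregman_consistent_for_mean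
    {Ω : Type*} [MeasurableSpace Ω] (P : Measure Ω) [IsProbabilityMeasure P]
    (I : Set ℝ) (hI : Convex ℝ I) (φ φ' : ℝ → ℝ)
    (hconv : ConvexOn ℝ I φ)
    (hsub : ∀ a ∈ I, ∀ y ∈ I, φ a + φ' a * (y - a) ≤ φ y)
    (Y : Ω → ℝ) (hYmeas : Measurable Y) (hYI : ∀ ω, Y ω ∈ I)
    (hYint : Integrable Y P) (hφYint : Integrable (fun ω => φ (Y ω)) P)
    (μ : ℝ) (hμ : μ = ∫ ω, Y ω ∂P) (hμI : μ ∈ I) (a : ℝ) (ha : a ∈ I) :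
    (∫ ω, bregman φ φ' (Y ω) μ ∂P ≤ ∫ ω, bregman φ φ' (Y ω) a ∂P) ∧
    (StrictConvexOn ℝ I φ →
      ∫ ω, bregman φ φ' (Y ω) μ ∂P = ∫ ω, bregman φ φ' (Y ω) a ∂P → a = μ) := by
  have key : ∀ c : ℝ, ∫ ω, bregman φ φ' (Y ω) c ∂P
      = (∫ ω, φ (Y ω) ∂P) - φ c - φ' c * (μ - c) := by
    intro c
    simp only [bregman]
    have hA : Integrable (fun ω => φ (Y ω) - φ c) P := hφYint.sub (integrable_const _)
    have hB : Integrable (fun ω => φ' c * (Y ω - c)) P :=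
      ((hYint.sub (integrable_const _)).const_mul _)
    rw [integral_sub hA hB, integral_sub hφYint (integrable_const _),
      integral_const_mul, integral_sub hYint (integrable_const _)]
    simp [← hμ]
  rw [key μ, key a]
  have hmain := hsub a ha μ hμI
  constructor
  · linarith
  · intro hstrict heq
    by_contra hne
    have hmI : (1/2 : ℝ) • a + (1/2 : ℝ) • μ ∈ I :=
      hI ha hμI (by norm_num) (by norm_num) (by norm_num)
    have hlt := hstrict.2 ha hμI hne (by norm_num : (0:ℝ) < 1/2)
      (by norm_num : (0:ℝ) < 1/2) (by norm_num)
    have hm2 := hsub a ha _ hmI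
    simp only [smul_eq_mul] at hlt hm2 hmI
    have : (1/2 : ℝ) * a + 1/2 * μ - a = (μ - a) / 2 := by ring
    rw [this] at hm2
    nlinarith
end

section
/- Let g: I → ℝ be strictly increasing on an interval I, τ ∈ (0,1), and let Y ~ F be supported in I with E[|g(Y)|] < ∞. Define the generalized piecewise linear loss L(y;a) = (g(y) − g(a))(τ − 𝟙{y ≤ a}). Then for every q ∈ q_τ(F) and every a ∈ I, E[L(Y;q)] ≤ E[L(Y;a)], with equality only if a ∈ q_τ(F). -/
open MeasureTheory
open scoped ENNReal

/-- Generalized piecewise linear loss. -/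
noncomputable def gplLoss (g : ℝ → ℝ) (τ y a : ℝ) : ℝ :=
  (g y - g a) * (τ - if y ≤ a then 1 else 0)

def quantileSet (μ : Measure ℝ) (τ : ℝ) : Set ℝ :=
  {t | (μ (Set.Iio t)).toReal ≤ τ ∧ τ ≤ (μ (Set.Iic t)).toReal}

open Set in
lemma gpl_integrable (μ : Measure ℝ) [IsProbabilityMeasure μ] (g : ℝ → ℝ)
    (hgint : Integrable (fun y => g y) μ) (τ a : ℝ) :
    Integrable (fun y => gplLoss g τ y a) μ := by
  have hmul : Integrable (fun y => g y - g a) μ := hgint.sub (integrable_const _)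
  have hmeas : AEStronglyMeasurable (fun y => τ - if y ≤ a then (1:ℝ) else 0) μ := by
    refine Measurable.aestronglyMeasurable ?_
    exact measurable_const.sub
      (Measurable.ite measurableSet_Iic measurable_const measurable_const)
  have hbdd : ∀ᵐ y ∂μ, ‖τ - if y ≤ a then (1:ℝ) else 0‖ ≤ |τ| + 1 := by
    refine Filter.Eventually.of_forall fun y => ?_
    rw [Real.norm_eq_abs]
    split_ifs with h
    · calc |τ - 1| ≤ |τ| + |1| := abs_sub _ _
        _ = |τ| + 1 := by norm_num
    · simp
  have h2 : Integrable
      (fun y => (τ - if y ≤ a then (1:ℝ) else 0) * (g y - g a)) μ :=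
    hmul.bdd_mul hmeas hbdd
  refine h2.congr (Filter.Eventually.of_forall fun y => ?_)
  show _ = gplLoss g τ y a
  rw [gplLoss]; ring

open Set in
lemma gpl_key_ge (g : ℝ → ℝ) (τ q a : ℝ) (hqa : q ≤ a) (y : ℝ) :
    gplLoss g τ y a - gplLoss g τ y q =
      (g a - g q) * ((Iic q).indicator (fun _ => (1:ℝ)) y - τ)
      + (Ioc q a).indicator (fun z => g a - g z) y := by
  simp only [gplLoss, Set.indicator_apply, mem_Iic, mem_Ioc]
  by_cases h1 : y ≤ q
  · have h2 : y ≤ a := h1.trans hqa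
    have h3 : ¬ q < y := not_lt.mpr h1
    simp only [h1, h2, if_true, h3, false_and, if_false]
    ring
  · have h1' : q < y := lt_of_not_ge h1
    by_cases h2 : y ≤ a
    · simp only [h1, h2, if_true, if_false, h1', true_and]
      ring
    · simp only [h1, h2, if_false, and_false]
      ring

open Set in
lemma gpl_key_le (g : ℝ → ℝ) (τ q a : ℝ) (haq : a ≤ q) (y : ℝ) :
    gplLoss g τ y a - gplLoss g τ y q =
      (g q - g a) * (τ - (Iio q).indicator (fun _ => (1:ℝ)) y)
      + (Ioo a q).indicator (fun z => g z - g a) y := by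
  simp only [gplLoss, Set.indicator_apply, mem_Iio, mem_Ioo]
  by_cases h1 : y ≤ a
  · have h2 : y ≤ q := h1.trans haq
    have h3 : y < q ∨ y = q := lt_or_eq_of_le h2
    by_cases h4 : y < q
    · simp only [h1, h2, if_true, h4, not_lt.mpr h1, false_and, if_false]
      ring
    · have hya : y = q := h3.resolve_left h4
      have : a = q := le_antisymm haq (hya ▸ h1)
      subst hya
      simp only [h1, le_refl, if_true, h4, if_false, lt_irrefl, and_false]
      subst this; ring
  · have h1' : a < y := lt_of_not_ge h1
    by_cases h2 : y ≤ q
    · by_cases h4 : y < q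
      · simp only [h1, h2, if_true, if_false, h4, h1', true_and]
        ring
      · have hyq : y = q := le_antisymm h2 (not_lt.mp h4)
        subst hyq
        simp only [h1, le_refl, if_true, if_false, lt_irrefl, and_false]
        ring
    · have h4 : ¬ y < q := fun h => h2 h.le
      simp only [h1, h2, if_false, h4, and_false]
      ring

theorem gpl_strictly_consistent_for_quantile
    (μ : Measure ℝ) [IsProbabilityMeasure μ]
    (I : Set ℝ) (hI : Convex ℝ I) (hsupp : ∀ᵐ y ∂μ, y ∈ I)
    (g : ℝ → ℝ) (hg : StrictMonoOn g I)
    (hgint : Integrable (fun y => g y) μ)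
    (τ : ℝ) (hτ : τ ∈ Set.Ioo (0:ℝ) 1)
    (q : ℝ) (hq : q ∈ quantileSet μ τ) (a : ℝ) (ha : a ∈ I) :
    (∫ y, gplLoss g τ y q ∂μ ≤ ∫ y, gplLoss g τ y a ∂μ) ∧
    (∫ y, gplLoss g τ y q ∂μ = ∫ y, gplLoss g τ y a ∂μ → a ∈ quantileSet μ τ) := by
  obtain ⟨hq1, hq2⟩ := hq
  obtain ⟨hτ0, hτ1⟩ := hτ
  have hIoc : I.OrdConnected := hI.ordConnected
  -- q ∈ I
  have hnmem : μ {y | y ∉ I} = 0 := by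
    rw [measure_eq_zero_iff_ae_notMem]
    filter_upwards [hsupp] with y hy
    simp [hy]
  have hIic_pos : μ (Set.Iic q) ≠ 0 := by
    intro h
    rw [h] at hq2
    simp at hq2
    linarith
  have hIio_lt : μ (Set.Iio q) < 1 := by
    by_contra h
    push_neg at h
    have : (1:ℝ) ≤ (μ (Set.Iio q)).toReal := by
      have h1 : ((1:ℝ≥0∞)).toReal ≤ (μ (Set.Iio q)).toReal :=
        ENNReal.toReal_mono (measure_ne_top μ _) h
      simpa using h1
    linarith
  have hIci_pos : μ (Set.Ici q) ≠ 0 := by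
    intro h
    have huniv : (Set.Iio q) ∪ (Set.Ici q) = Set.univ := Set.Iio_union_Ici
    have : (1:ℝ≥0∞) ≤ μ (Set.Iio q) + μ (Set.Ici q) := by
      calc (1:ℝ≥0∞) = μ Set.univ := (measure_univ).symm
        _ = μ ((Set.Iio q) ∪ (Set.Ici q)) := by rw [huniv]
        _ ≤ μ (Set.Iio q) + μ (Set.Ici q) := measure_union_le _ _
    rw [h, add_zero] at this
    exact absurd (lt_of_lt_of_le hIio_lt this) (lt_irrefl _)
  have hqI : q ∈ I := by
    have h1 : ∃ y, y ∈ I ∧ y ≤ q := by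
      by_contra h
      push_neg at h
      have hsub : Set.Iic q ⊆ {y | y ∉ I} := fun y hy hyI =>
        absurd (Set.mem_Iic.mp hy) (not_le.mpr (h y hyI))
      exact hIic_pos (le_antisymm (hnmem ▸ measure_mono hsub) zero_le)
    have h2 : ∃ y, y ∈ I ∧ q ≤ y := by
      by_contra h
      push_neg at h
      have hsub : Set.Ici q ⊆ {y | y ∉ I} := fun y hy hyI =>
        absurd (Set.mem_Ici.mp hy) (not_le.mpr (h y hyI))
      exact hIci_pos (le_antisymm (hnmem ▸ measure_mono hsub) zero_le)
    obtain ⟨y1, hy1I, hy1⟩ := h1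
    obtain ⟨y2, hy2I, hy2⟩ := h2
    exact hIoc.out hy1I hy2I ⟨hy1, hy2⟩
  have hint_a := gpl_integrable μ g hgint τ a
  have hint_q := gpl_integrable μ g hgint τ q
  by_cases haq : a = q
  · subst haq
    exact ⟨le_rfl, fun _ => ⟨hq1, hq2⟩⟩
  rcases lt_or_gt_of_ne haq with hlt | hgt
  · -- a < q
    have hIccI : Set.Icc a q ⊆ I := hIoc.out ha hqI
    set A : ℝ := (g q - g a) * (τ - (μ (Set.Iio q)).toReal) with hA_def
    set B : ℝ := ∫ y in Set.Ioo a q, (g y - g a) ∂μ with hB_def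
    have hind_int : Integrable ((Set.Iio q).indicator (fun _ => (1:ℝ))) μ :=
      (integrable_const (1:ℝ)).indicator measurableSet_Iio
    have hf1int : Integrable
        (fun y => (g q - g a) * (τ - (Set.Iio q).indicator (fun _ => (1:ℝ)) y)) μ :=
      ((integrable_const τ).sub hind_int).const_mul _
    have hf2int : Integrable ((Set.Ioo a q).indicator (fun z => g z - g a)) μ :=
      (hgint.sub (integrable_const _)).indicator measurableSet_Ioo
    have hsplit : ∫ y, gplLoss g τ y a ∂μ - ∫ y, gplLoss g τ y q ∂μ = A + B := by
      rw [← integral_sub hint_a hint_q]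
      rw [integral_congr_ae (Filter.Eventually.of_forall (gpl_key_le g τ q a hlt.le))]
      rw [integral_add hf1int hf2int]
      congr 1
      · rw [integral_const_mul]
        congr 1
        rw [integral_sub (integrable_const τ) hind_int,
          MeasureTheory.integral_indicator_const (1:ℝ) measurableSet_Iio]
        simp [measureReal_def]
      · exact integral_indicator measurableSet_Ioo
    have hgqa : g a < g q := hg ha hqI hlt
    have hApos : 0 ≤ A := by
      apply mul_nonneg (by linarith)
      linarith
    have hBpos : 0 ≤ B := by
      refine setIntegral_nonneg measurableSet_Ioo fun y hy => ?_
      have hyI : y ∈ I := hIccI ⟨hy.1.le, hy.2.le⟩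
      have := hg.monotoneOn ha hyI hy.1.le
      linarith
    constructor
    · linarith
    · intro heq
      have hAB0 : A + B = 0 := by rw [← hsplit]; linarith
      have hA0 : A = 0 := by linarith
      have hB0 : B = 0 := by linarith
      have hF : (μ (Set.Iio q)).toReal = τ := by
        rcases mul_eq_zero.mp hA0 with h | h
        · linarith
        · linarith
      -- μ (Ioo a q) = 0
      have hae0 : ∀ᵐ y ∂μ, y ∈ Set.Ioo a q → g y - g a = 0 := by
        have hnn : 0 ≤ᵐ[μ.restrict (Set.Ioo a q)] fun y => g y - g a := by
          refine (ae_restrict_iff' measurableSet_Ioo).mpr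
            (Filter.Eventually.of_forall fun y hy => ?_)
          have hyI : y ∈ I := hIccI ⟨hy.1.le, hy.2.le⟩
          have := hg.monotoneOn ha hyI hy.1.le
          simp; linarith
        have hii : IntegrableOn (fun y => g y - g a) (Set.Ioo a q) μ :=
          (hgint.sub (integrable_const _)).integrableOn
        have hz := (setIntegral_eq_zero_iff_of_nonneg_ae hnn hii).mp hB0
        exact ae_imp_of_ae_restrict hz
      have hIoo0 : μ (Set.Ioo a q) = 0 := by
        rw [measure_eq_zero_iff_ae_notMem]
        filter_upwards [hae0] with y hy hmem
        have hyI : y ∈ I := hIccI ⟨hmem.1.le, hmem.2.le⟩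
        have := hg ha hyI hmem.1
        have := hy hmem
        linarith
      refine ⟨?_, ?_⟩
      · have hmono : μ (Set.Iio a) ≤ μ (Set.Iio q) :=
          measure_mono (Set.Iio_subset_Iio hlt.le)
        calc (μ (Set.Iio a)).toReal ≤ (μ (Set.Iio q)).toReal :=
              ENNReal.toReal_mono (measure_ne_top μ _) hmono
          _ = τ := hF
      · have hsub : Set.Iio q ⊆ Set.Iic a ∪ Set.Ioo a q := by
          intro y hy
          rcases le_or_gt y a with h | h
          · exact Or.inl h
          · exact Or.inr ⟨h, hy⟩
        have : μ (Set.Iio q) ≤ μ (Set.Iic a) := by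
          calc μ (Set.Iio q) ≤ μ (Set.Iic a ∪ Set.Ioo a q) := measure_mono hsub
            _ ≤ μ (Set.Iic a) + μ (Set.Ioo a q) := measure_union_le _ _
            _ = μ (Set.Iic a) := by rw [hIoo0, add_zero]
        calc τ = (μ (Set.Iio q)).toReal := hF.symm
          _ ≤ (μ (Set.Iic a)).toReal := ENNReal.toReal_mono (measure_ne_top μ _) this
  · -- q < a
    have hIccI : Set.Icc q a ⊆ I := hIoc.out hqI ha
    set A : ℝ := (g a - g q) * ((μ (Set.Iic q)).toReal - τ) with hA_def
    set B : ℝ := ∫ y in Set.Ioc q a, (g a - g y) ∂μ with hB_def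
    have hind_int : Integrable ((Set.Iic q).indicator (fun _ => (1:ℝ))) μ :=
      (integrable_const (1:ℝ)).indicator measurableSet_Iic
    have hf1int : Integrable
        (fun y => (g a - g q) * ((Set.Iic q).indicator (fun _ => (1:ℝ)) y - τ)) μ :=
      (hind_int.sub (integrable_const τ)).const_mul _
    have hf2int : Integrable ((Set.Ioc q a).indicator (fun z => g a - g z)) μ :=
      ((integrable_const _).sub hgint).indicator measurableSet_Ioc
    have hsplit : ∫ y, gplLoss g τ y a ∂μ - ∫ y, gplLoss g τ y q ∂μ = A + B := by
      rw [← integral_sub hint_a hint_q]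
      rw [integral_congr_ae (Filter.Eventually.of_forall (gpl_key_ge g τ q a hgt.le))]
      rw [integral_add hf1int hf2int]
      congr 1
      · rw [integral_const_mul]
        congr 1
        rw [integral_sub hind_int (integrable_const τ),
          MeasureTheory.integral_indicator_const (1:ℝ) measurableSet_Iic]
        simp [measureReal_def]
      · exact integral_indicator measurableSet_Ioc
    have hgqa : g q < g a := hg hqI ha hgt
    have hApos : 0 ≤ A := by
      apply mul_nonneg (by linarith)
      linarith
    have hBpos : 0 ≤ B := by
      refine setIntegral_nonneg measurableSet_Ioc fun y hy => ?_
      have hyI : y ∈ I := hIccI ⟨hy.1.le, hy.2⟩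
      have := hg.monotoneOn hyI ha hy.2
      linarith
    constructor
    · linarith
    · intro heq
      have hAB0 : A + B = 0 := by rw [← hsplit]; linarith
      have hA0 : A = 0 := by linarith
      have hB0 : B = 0 := by linarith
      have hF : (μ (Set.Iic q)).toReal = τ := by
        rcases mul_eq_zero.mp hA0 with h | h
        · linarith
        · linarith
      have hae0 : ∀ᵐ y ∂μ, y ∈ Set.Ioc q a → g a - g y = 0 := by
        have hnn : 0 ≤ᵐ[μ.restrict (Set.Ioc q a)] fun y => g a - g y := by
          refine (ae_restrict_iff' measurableSet_Ioc).mpr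
            (Filter.Eventually.of_forall fun y hy => ?_)
          have hyI : y ∈ I := hIccI ⟨hy.1.le, hy.2⟩
          have := hg.monotoneOn hyI ha hy.2
          simp; linarith
        have hii : IntegrableOn (fun y => g a - g y) (Set.Ioc q a) μ :=
          ((integrable_const _).sub hgint).integrableOn
        have hz := (setIntegral_eq_zero_iff_of_nonneg_ae hnn hii).mp hB0
        exact ae_imp_of_ae_restrict hz
      have hIoo0 : μ (Set.Ioo q a) = 0 := by
        rw [measure_eq_zero_iff_ae_notMem]
        filter_upwards [hae0] with y hy hmem
        have hyI : y ∈ I := hIccI ⟨hmem.1.le, hmem.2.le⟩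
        have := hg hyI ha hmem.2
        have := hy ⟨hmem.1, hmem.2.le⟩
        linarith
      refine ⟨?_, ?_⟩
      · have hsub : Set.Iio a ⊆ Set.Iic q ∪ Set.Ioo q a := by
          intro y hy
          rcases le_or_gt y q with h | h
          · exact Or.inl h
          · exact Or.inr ⟨h, hy⟩
        have : μ (Set.Iio a) ≤ μ (Set.Iic q) := by
          calc μ (Set.Iio a) ≤ μ (Set.Iic q ∪ Set.Ioo q a) := measure_mono hsub
            _ ≤ μ (Set.Iic q) + μ (Set.Ioo q a) := measure_union_le _ _
            _ = μ (Set.Iic q) := by rw [hIoo0, add_zero]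
        calc (μ (Set.Iio a)).toReal ≤ (μ (Set.Iic q)).toReal :=
              ENNReal.toReal_mono (measure_ne_top μ _) this
          _ = τ := hF
      · have hmono : μ (Set.Iic q) ≤ μ (Set.Iic a) :=
          measure_mono (Set.Iic_subset_Iic.mpr hgt.le)
        calc τ ≤ (μ (Set.Iic q)).toReal := hq2
          _ ≤ (μ (Set.Iic a)).toReal := ENNReal.toReal_mono (measure_ne_top μ _) hmono
end

section
/- Fix v ∈ ℝ, τ ∈ (0,1), and a strictly convex differentiable function Φ: ℝ² → ℝ. For a random variable Y with finite first moment, the map (e⁻, e⁺) ↦ E[⟨∇Φ(e⁻,e⁺), (e⁻ + (1/τ)S⁻_τ(Y;v), e⁺ − (1/(1−τ))S⁺_τ(Y;v))⟩ − Φ(e⁻,e⁺)] is uniquely minimized at (e⁻,e⁺) = (−(1/τ)E[S⁻_τ(Y;v)], (1/(1−τ))E[S⁺_τ(Y;v)]). -/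
open MeasureTheory

lemma tangent_le {f : ℝ × ℝ → ℝ} (hc : ConvexOn ℝ Set.univ f)
    {x : ℝ × ℝ} {f' : ℝ × ℝ →L[ℝ] ℝ} (hd : HasFDerivAt f f' x) (y : ℝ × ℝ) :
    f x + f' (y - x) ≤ f y := by
  set L : ℝ →ᵃ[ℝ] ℝ × ℝ := AffineMap.lineMap x y with hL
  have hgc : ConvexOn ℝ (L ⁻¹' Set.univ) (f ∘ L) := hc.comp_affineMap L
  have hLt : ∀ t : ℝ, L t = x + t • (y - x) := by
    intro t
    simp [hL, AffineMap.lineMap_apply]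
    abel
  have hderivL : HasDerivAt (fun t : ℝ => L t) (y - x) 0 := by
    simp only [hLt]
    simpa using ((hasDerivAt_id (0:ℝ)).smul_const (y - x)).const_add x
  have hL0 : L 0 = x := by simp [hLt]
  have hd' : HasFDerivAt f f' ((fun t : ℝ => L t) 0) := by simpa [hL0] using hd
  have hg : HasDerivAt (f ∘ L) (f' (y - x)) 0 := hd'.comp_hasDerivAt 0 hderivL
  have hslope : Filter.Tendsto (slope (f ∘ L) 0) (nhdsWithin 0 (Set.Ioi 0)) (nhds (f' (y - x))) := by
    have := hasDerivAt_iff_tendsto_slope.1 hg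
    exact this.mono_left (nhdsWithin_mono _ (fun t ht => ne_of_gt ht))
  have key : f' (y - x) ≤ (f ∘ L) 1 - (f ∘ L) 0 := by
    refine le_of_tendsto hslope ?_
    filter_upwards [Ioo_mem_nhdsGT_of_mem (Set.left_mem_Ico.2 one_pos)] with t ht
    have ht0 : 0 < t := ht.1
    have h2' := hgc.2 (Set.mem_univ (0:ℝ)) (Set.mem_univ (1:ℝ))
      (by linarith [ht.2] : (0:ℝ) ≤ 1 - t) (le_of_lt ht0) (by ring)
    simp only [smul_eq_mul, mul_one, mul_zero, add_zero] at h2'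
    have h2 : (f ∘ L) t ≤ (1 - t) * (f ∘ L) 0 + t * (f ∘ L) 1 := by
      simpa only [zero_add] using h2'
    rw [slope_def_field, sub_zero, div_le_iff₀ ht0]
    nlinarith
  have hL1 : L 1 = y := by simp [hLt]
  have := key
  simp only [Function.comp, hL0, hL1] at this
  linarith

lemma tangent_lt {f : ℝ × ℝ → ℝ} (hs : StrictConvexOn ℝ Set.univ f)
    {x : ℝ × ℝ} {f' : ℝ × ℝ →L[ℝ] ℝ} (hd : HasFDerivAt f f' x) {y : ℝ × ℝ}
    (hne : x ≠ y) : f x + f' (y - x) < f y := by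
  set m : ℝ × ℝ := (1/2 : ℝ) • x + (1/2 : ℝ) • y with hm
  have h1 : f x + f' (m - x) ≤ f m := tangent_le hs.convexOn hd m
  have h2 : f m < (1/2 : ℝ) * f x + (1/2 : ℝ) * f y := by
    have := hs.2 (Set.mem_univ x) (Set.mem_univ y) hne (by norm_num) (by norm_num)
      (by norm_num : (1/2:ℝ) + 1/2 = 1)
    simpa [hm, smul_eq_mul] using this
  have hmx : m - x = (1/2 : ℝ) • (y - x) := by
    rw [hm]; module
  rw [hmx, f'.map_smul] at h1
  simp only [smul_eq_mul] at h1
  linarith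

lemma integrable_Sminus' {Ω : Type*} [MeasurableSpace Ω] (P : Measure Ω)
    (Y : Ω → ℝ) (hYmeas : Measurable Y) (hYint : Integrable Y P)
    [IsFiniteMeasure P] (τ v : ℝ) :
    Integrable (fun ω => Sminus τ (Y ω) v) P := by
  have hs : MeasurableSet {ω | Y ω ≤ v} := hYmeas measurableSet_Iic
  have : (fun ω => Sminus τ (Y ω) v) =
      fun ω => ({ω | Y ω ≤ v}.indicator (fun _ => v) ω - τ * v)
        - {ω | Y ω ≤ v}.indicator Y ω := by
    funext ω
    by_cases h : Y ω ≤ v <;> simp [Sminus, Set.indicator, h] <;> ring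
  rw [this]
  exact (((integrable_const v).indicator hs).sub (integrable_const _)).sub
    (hYint.indicator hs)

lemma integrable_Splus' {Ω : Type*} [MeasurableSpace Ω] (P : Measure Ω)
    (Y : Ω → ℝ) (hYmeas : Measurable Y) (hYint : Integrable Y P)
    [IsFiniteMeasure P] (τ v : ℝ) :
    Integrable (fun ω => Splus τ (Y ω) v) P := by
  have hs : MeasurableSet {ω | v < Y ω} := hYmeas measurableSet_Ioi
  have : (fun ω => Splus τ (Y ω) v) =
      fun ω => ((1 - τ) * v - {ω | v < Y ω}.indicator (fun _ => v) ω)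
        + {ω | v < Y ω}.indicator Y ω := by
    funext ω
    by_cases h : v < Y ω <;> simp [Splus, Set.indicator, h] <;> ring
  rw [this]
  exact ((integrable_const _).sub ((integrable_const v).indicator hs)).add
    (hYint.indicator hs)

lemma integral_lin_combo {Ω : Type*} [MeasurableSpace Ω] (P : Measure Ω)
    [IsProbabilityMeasure P] {Sm Sp : Ω → ℝ}
    (hSm : Integrable Sm P) (hSp : Integrable Sp P)
    (c1 c2 c3 k l e1 e2 : ℝ) :
    ∫ ω, (c1 * (e1 + k * Sm ω) + c2 * (e2 - l * Sp ω) - c3) ∂P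
      = c1 * (e1 + k * ∫ ω, Sm ω ∂P) + c2 * (e2 - l * ∫ ω, Sp ω ∂P) - c3 := by
  have h : ∀ ω, c1 * (e1 + k * Sm ω) + c2 * (e2 - l * Sp ω) - c3
      = (c1 * e1 + c2 * e2 - c3) + ((c1 * k) * Sm ω - (c2 * l) * Sp ω) := by
    intro ω; ring
  simp only [h]
  rw [integral_add (integrable_const _)
      (show Integrable (fun ω => c1 * k * Sm ω - c2 * l * Sp ω) P from
        (hSm.const_mul _).sub (hSp.const_mul _)),
    integral_sub (hSm.const_mul _) (hSp.const_mul _),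
    integral_const, integral_const_mul, integral_const_mul]
  simp [measure_univ]
  ring

/-- For fixed `v`, the Bregman-type map in `(e⁻, e⁺)` built from a strictly convex
differentiable `Φ` (with partial derivatives `Φ₁, Φ₂`) is uniquely minimized at
`(-(1/τ)E[S⁻_τ(Y;v)], (1/(1-τ))E[S⁺_τ(Y;v)])`. -/
theorem bregman2D_unique_min
    {Ω : Type*} [MeasurableSpace Ω] (P : Measure Ω) [IsProbabilityMeasure P]
    (Y : Ω → ℝ) (hYmeas : Measurable Y) (hYint : Integrable Y P)
    (τ v : ℝ) (hτ : τ ∈ Set.Ioo (0:ℝ) 1)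
    (Φ Φ₁ Φ₂ : ℝ → ℝ → ℝ)
    (hgrad : ∀ a b : ℝ, HasFDerivAt (fun p : ℝ × ℝ => Φ p.1 p.2)
      ((Φ₁ a b) • (ContinuousLinearMap.fst ℝ ℝ ℝ) +
        (Φ₂ a b) • (ContinuousLinearMap.snd ℝ ℝ ℝ)) (a, b))
    (hstrict : StrictConvexOn ℝ Set.univ (fun p : ℝ × ℝ => Φ p.1 p.2)) :
    ∀ em ep : ℝ,
      (em, ep) ≠ (-(1/τ) * ∫ ω, Sminus τ (Y ω) v ∂P,
                  (1/(1-τ)) * ∫ ω, Splus τ (Y ω) v ∂P) →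
      (∫ ω, (Φ₁ (-(1/τ) * ∫ ω', Sminus τ (Y ω') v ∂P) ((1/(1-τ)) * ∫ ω', Splus τ (Y ω') v ∂P)
              * ((-(1/τ) * ∫ ω', Sminus τ (Y ω') v ∂P) + (1/τ) * Sminus τ (Y ω) v)
            + Φ₂ (-(1/τ) * ∫ ω', Sminus τ (Y ω') v ∂P) ((1/(1-τ)) * ∫ ω', Splus τ (Y ω') v ∂P)
              * (((1/(1-τ)) * ∫ ω', Splus τ (Y ω') v ∂P) - (1/(1-τ)) * Splus τ (Y ω) v)
            - Φ (-(1/τ) * ∫ ω', Sminus τ (Y ω') v ∂P) ((1/(1-τ)) * ∫ ω', Splus τ (Y ω') v ∂P)) ∂P)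
      < ∫ ω, (Φ₁ em ep * (em + (1/τ) * Sminus τ (Y ω) v)
            + Φ₂ em ep * (ep - (1/(1-τ)) * Splus τ (Y ω) v)
            - Φ em ep) ∂P := by
  intro em ep hne
  have hSm : Integrable (fun ω => Sminus τ (Y ω) v) P :=
    integrable_Sminus' P Y hYmeas hYint τ v
  have hSp : Integrable (fun ω => Splus τ (Y ω) v) P :=
    integrable_Splus' P Y hYmeas hYint τ v
  set A : ℝ := ∫ ω, Sminus τ (Y ω) v ∂P with hA
  set B : ℝ := ∫ ω, Splus τ (Y ω) v ∂P with hB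
  set gm : ℝ := -(1/τ) * A with hgm
  set gp : ℝ := (1/(1-τ)) * B with hgp
  have lhs_eq : (∫ ω, (Φ₁ gm gp * (gm + (1/τ) * Sminus τ (Y ω) v)
      + Φ₂ gm gp * (gp - (1/(1-τ)) * Splus τ (Y ω) v) - Φ gm gp) ∂P)
      = Φ₁ gm gp * (gm + (1/τ) * A) + Φ₂ gm gp * (gp - (1/(1-τ)) * B) - Φ gm gp :=
    integral_lin_combo P hSm hSp _ _ _ _ _ _ _
  have rhs_eq : (∫ ω, (Φ₁ em ep * (em + (1/τ) * Sminus τ (Y ω) v)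
      + Φ₂ em ep * (ep - (1/(1-τ)) * Splus τ (Y ω) v) - Φ em ep) ∂P)
      = Φ₁ em ep * (em + (1/τ) * A) + Φ₂ em ep * (ep - (1/(1-τ)) * B) - Φ em ep :=
    integral_lin_combo P hSm hSp _ _ _ _ _ _ _
  rw [lhs_eq, rhs_eq]
  have hzero1 : gm + (1/τ) * A = gm - gm := by rw [hgm]; ring
  have hzero2 : gp - (1/(1-τ)) * B = gp - gp := by rw [hgp]
  have hne' : ((em, ep) : ℝ × ℝ) ≠ (gm, gp) := hne
  have htan := tangent_lt hstrict (hgrad em ep) hne'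
  simp only [ContinuousLinearMap.add_apply, ContinuousLinearMap.coe_smul',
    Pi.smul_apply, ContinuousLinearMap.coe_fst', ContinuousLinearMap.coe_snd',
    smul_eq_mul] at htan
  have hfst : ((gm, gp) - (em, ep) : ℝ × ℝ).1 = gm - em := rfl
  have hsnd : ((gm, gp) - (em, ep) : ℝ × ℝ).2 = gp - ep := rfl
  rw [hfst, hsnd] at htan
  have e1 : em + (1/τ) * A = em - gm := by rw [hgm]; ring
  have e2 : ep - (1/(1-τ)) * B = ep - gp := by rw [hgp]
  rw [hzero1, hzero2, e1, e2]
  have r1 : Φ₁ em ep * (em - gm) = -(Φ₁ em ep * (gm - em)) := by ring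
  have r2 : Φ₂ em ep * (ep - gp) = -(Φ₂ em ep * (gp - ep)) := by ring
  simp only [sub_self, mul_zero, zero_add, zero_sub] at *
  linarith
end

section
/- Let τ ∈ (0,1) and let ℱ contain only distributions with finite first moments supported on an interval 𝒴 ⊆ ℝ. Suppose Φ: 𝒴² → ℝ is strictly convex with gradient ∇Φ, g: 𝒴 → ℝ, and for all (e⁻,e⁺) ∈ 𝒴² the function v ↦ g(v) + (1/τ)∂₁Φ(e⁻,e⁺)v − (1/(1−τ))∂₂Φ(e⁻,e⁺)v is strictly increasing, with E[|g(Y)|] < ∞ and E[|Φ(Y,Y)|] < ∞ for all Y ~ F ∈ ℱ. Then the scoring function L(y;e⁻,v,e⁺) = (g(y)−g(v))(τ−𝟙{y≤v}) + ⟨∇Φ(e⁻,e⁺), (e⁻ + (1/τ)S⁻_τ(y;v), e⁺ − (1/(1−τ))S⁺_τ(y;v))⟩ − Φ(e⁻,e⁺) + Φ(y,y) is strictly ℱ-consistent for the composite triplet (ES⁻_τ, q_τ, ES⁺_τ): for all Y ~ F ∈ ℱ, the expected score E[L(Y; e⁻,v,e⁺)] is minimized exactly at e⁻ = ES⁻_τ(F),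 v ∈ q_τ(F), e⁺ = ES⁺_τ(F). -/
open MeasureTheory

/-- The scoring function for the composite triplet (ES⁻_τ, q_τ, ES⁺_τ). -/
noncomputable def compositeScore (g : ℝ → ℝ) (Φ Φ₁ Φ₂ : ℝ → ℝ → ℝ) (τ y em v ep : ℝ) : ℝ :=
  (g y - g v) * (τ - if y ≤ v then 1 else 0)
    + Φ₁ em ep * (em + (1/τ) * Sminus τ y v)
    + Φ₂ em ep * (ep - (1/(1-τ)) * Splus τ y v)
    - Φ em ep + Φ y y

open Set

namespace CS

variable {μ : Measure ℝ} [IsProbabilityMeasure μ]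

lemma cdfR_mono {x y : ℝ} (h : x ≤ y) : (μ (Iic x)).toReal ≤ (μ (Iic y)).toReal :=
  ENNReal.toReal_mono (measure_ne_top μ _) (measure_mono (Iic_subset_Iic.2 h))

lemma cdfR_le_one (x : ℝ) : (μ (Iic x)).toReal ≤ 1 := by
  have := prob_le_one (μ := μ) (s := Iic x)
  simpa using ENNReal.toReal_mono (by simp) this

lemma cdfR_right_cont {x p : ℝ} (h : ∀ z, x < z → p ≤ (μ (Iic z)).toReal) :
    p ≤ (μ (Iic x)).toReal := by
  have hanti : Antitone (fun n : ℕ => Iic (x + 1 / (n + 1))) := by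
    intro a b hab
    refine Iic_subset_Iic.2 (add_le_add (le_refl x) ?_)
    have hab' : (a:ℝ) + 1 ≤ (b:ℝ) + 1 := by exact_mod_cast Nat.add_le_add hab le_rfl
    exact one_div_le_one_div_of_le (by positivity) hab'
  have hint : ⋂ n : ℕ, Iic (x + 1 / ((n : ℝ) + 1)) = Iic x := by
    ext y
    simp only [mem_iInter, mem_Iic]
    constructor
    · intro hy
      by_contra hxy
      push_neg at hxy
      obtain ⟨n, hn⟩ := exists_nat_one_div_lt (sub_pos.2 hxy)
      have := hy n
      nlinarith [hn]
    · intro hy n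
      have : (0:ℝ) < 1 / ((n:ℝ) + 1) := by positivity
      linarith
  have htend : Filter.Tendsto (fun n : ℕ => μ (Iic (x + 1 / ((n : ℝ) + 1)))) Filter.atTop
      (nhds (μ (Iic x))) := by
    have := tendsto_measure_iInter_atTop (μ := μ)
      (s := fun n : ℕ => Iic (x + 1 / ((n : ℝ) + 1)))
      (fun n => (measurableSet_Iic).nullMeasurableSet) hanti ⟨0, measure_ne_top μ _⟩
    rwa [hint] at this
  have htendR : Filter.Tendsto (fun n : ℕ => (μ (Iic (x + 1 / ((n : ℝ) + 1)))).toReal)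
      Filter.atTop (nhds ((μ (Iic x)).toReal)) :=
    (ENNReal.tendsto_toReal (measure_ne_top μ _)).comp htend
  refine ge_of_tendsto htendR (Filter.Eventually.of_forall fun n => ?_)
  exact h _ (lt_add_of_pos_right x (by positivity))

lemma exists_cdfR_lt {p : ℝ} (hp : 0 < p) : ∃ x : ℝ, (μ (Iic x)).toReal < p := by
  have hanti : Antitone (fun n : ℕ => Iic (-(n:ℝ))) := by
    intro a b hab
    exact Iic_subset_Iic.2 (by exact_mod_cast neg_le_neg (by exact_mod_cast hab))
  have hint : ⋂ n : ℕ, Iic (-(n:ℝ)) = ∅ := by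
    ext y
    simp only [mem_iInter, mem_Iic, mem_empty_iff_false, iff_false, not_forall]
    obtain ⟨n, hn⟩ := exists_nat_gt (-y)
    exact ⟨n, by push_neg; linarith⟩
  have htend : Filter.Tendsto (fun n : ℕ => μ (Iic (-(n:ℝ)))) Filter.atTop (nhds 0) := by
    have := tendsto_measure_iInter_atTop (μ := μ) (s := fun n : ℕ => Iic (-(n:ℝ)))
      (fun n => measurableSet_Iic.nullMeasurableSet) hanti ⟨0, measure_ne_top μ _⟩
    rwa [hint, measure_empty] at this
  have htendR : Filter.Tendsto (fun n : ℕ => (μ (Iic (-(n:ℝ)))).toReal) Filter.atTop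
      (nhds 0) := by
    simpa [Function.comp_def] using (ENNReal.tendsto_toReal (by simp)).comp htend
  obtain ⟨n, hn⟩ := (htendR.eventually_lt_const hp).exists
  exact ⟨-(n:ℝ), hn⟩

lemma exists_le_cdfR {p : ℝ} (hp : p < 1) : ∃ x : ℝ, p ≤ (μ (Iic x)).toReal := by
  have hmono : Monotone (fun n : ℕ => Iic ((n:ℝ))) := by
    intro a b hab
    exact Iic_subset_Iic.2 (by exact_mod_cast hab)
  have hun : ⋃ n : ℕ, Iic ((n:ℝ)) = univ := by
    ext y
    simp only [mem_iUnion, mem_Iic, mem_univ, iff_true]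
    obtain ⟨n, hn⟩ := exists_nat_gt y
    exact ⟨n, hn.le⟩
  have htend : Filter.Tendsto (fun n : ℕ => μ (Iic ((n:ℝ)))) Filter.atTop (nhds 1) := by
    have := tendsto_measure_iUnion_atTop (μ := μ) (s := fun n : ℕ => Iic ((n:ℝ))) hmono
    rwa [hun, measure_univ] at this
  have htendR : Filter.Tendsto (fun n : ℕ => (μ (Iic ((n:ℝ)))).toReal) Filter.atTop
      (nhds 1) := by
    simpa [Function.comp_def] using (ENNReal.tendsto_toReal (by simp)).comp htend
  obtain ⟨n, hn⟩ := (htendR.eventually_const_lt hp).exists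
  exact ⟨(n:ℝ), hn.le⟩

end CS
namespace CS

variable {μ : Measure ℝ} [IsProbabilityMeasure μ]

lemma bddBelow_genSet {p : ℝ} (hp : 0 < p) :
    BddBelow {x : ℝ | p ≤ (μ (Set.Iic x)).toReal} := by
  obtain ⟨x₀, hx₀⟩ := exists_cdfR_lt (μ := μ) hp
  refine ⟨x₀, fun y hy => ?_⟩
  by_contra hxy
  push_neg at hxy
  exact absurd (le_trans hy (cdfR_mono hxy.le)) (not_le.2 hx₀)

lemma nonempty_genSet {p : ℝ} (hp : p < 1) :
    Set.Nonempty {x : ℝ | p ≤ (μ (Set.Iic x)).toReal} :=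
  exists_le_cdfR hp

lemma genInv_le_iff {p x : ℝ} (hp : 0 < p) (hp1 : p < 1) :
    genInv μ p ≤ x ↔ p ≤ (μ (Set.Iic x)).toReal := by
  constructor
  · intro h
    refine cdfR_right_cont (fun z hz => ?_)
    have : sInf {x : ℝ | p ≤ (μ (Set.Iic x)).toReal} < z := lt_of_le_of_lt h hz
    obtain ⟨y, hy, hyz⟩ := exists_lt_of_csInf_lt (nonempty_genSet hp1) this
    exact le_trans hy (cdfR_mono hyz.le)
  · intro h
    exact csInf_le (bddBelow_genSet hp) h

lemma le_cdfR_genInv {p : ℝ} (hp : 0 < p) (hp1 : p < 1) :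
    p ≤ (μ (Set.Iic (genInv μ p))).toReal :=
  (genInv_le_iff hp hp1).mp le_rfl

lemma monotoneOn_genInv : MonotoneOn (genInv μ) (Set.Ioo 0 1) := by
  intro a ha b hb hab
  exact (genInv_le_iff ha.1 ha.2).mpr (le_trans hab (le_cdfR_genInv hb.1 hb.2))

lemma aemeasurable_genInv : AEMeasurable (genInv μ) (volume.restrict (Set.Ioo (0:ℝ) 1)) :=
  aemeasurable_restrict_of_monotoneOn measurableSet_Ioo monotoneOn_genInv

lemma cdfR_Iio_genInv_le {p : ℝ} (hp : 0 < p) (hp1 : p < 1) :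
    (μ (Set.Iio (genInv μ p))).toReal ≤ p := by
  set t := genInv μ p with ht
  have hmono : Monotone (fun n : ℕ => Iic (t - 1 / ((n:ℝ) + 1))) := by
    intro a b hab
    refine Iic_subset_Iic.2 (by
      have hab' : (a:ℝ) + 1 ≤ (b:ℝ) + 1 := by exact_mod_cast Nat.add_le_add hab le_rfl
      have := one_div_le_one_div_of_le (by positivity : (0:ℝ) < (a:ℝ)+1) hab'
      linarith)
  have hun : ⋃ n : ℕ, Iic (t - 1 / ((n:ℝ) + 1)) = Iio t := by
    ext y
    simp only [mem_iUnion, mem_Iic, mem_Iio]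
    constructor
    · rintro ⟨n, hn⟩
      have : (0:ℝ) < 1 / ((n:ℝ)+1) := by positivity
      linarith
    · intro hy
      obtain ⟨n, hn⟩ := exists_nat_one_div_lt (sub_pos.2 hy)
      exact ⟨n, by linarith⟩
  have htend : Filter.Tendsto (fun n : ℕ => (μ (Iic (t - 1 / ((n:ℝ) + 1)))).toReal)
      Filter.atTop (nhds ((μ (Iio t)).toReal)) := by
    have := tendsto_measure_iUnion_atTop (μ := μ) (s := fun n : ℕ => Iic (t - 1/((n:ℝ)+1))) hmono
    rw [hun] at this
    exact (ENNReal.tendsto_toReal (measure_ne_top μ _)).comp this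
  refine le_of_tendsto htend (Filter.Eventually.of_forall fun n => ?_)
  by_contra hc
  push_neg at hc
  have hmem : t - 1/((n:ℝ)+1) ∈ {x : ℝ | p ≤ (μ (Set.Iic x)).toReal} := hc.le
  have h2 : t ≤ t - 1/((n:ℝ)+1) := csInf_le (bddBelow_genSet hp) hmem
  have hpos : (0:ℝ) < 1/((n:ℝ)+1) := by positivity
  linarith

lemma genInv_lt_imp {p x : ℝ} (hp1 : p < 1) (h : genInv μ p < x) :
    ∃ y < x, p ≤ (μ (Set.Iic y)).toReal := by
  obtain ⟨y, hy, hyx⟩ := exists_lt_of_csInf_lt (nonempty_genSet hp1) h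
  exact ⟨y, hyx, hy⟩

end CS
namespace CS

variable {μ : Measure ℝ} [IsProbabilityMeasure μ]

lemma map_genInv : Measure.map (genInv μ) (volume.restrict (Set.Ioo (0:ℝ) 1)) = μ := by
  refine (Measure.ext_of_Iic μ _ (fun a => ?_)).symm
  rw [Measure.map_apply_of_aemeasurable aemeasurable_genInv measurableSet_Iic,
    Measure.restrict_apply' measurableSet_Ioo]
  have hset : genInv μ ⁻¹' (Iic a) ∩ Ioo 0 1 = Iic ((μ (Iic a)).toReal) ∩ Ioo 0 1 := by
    ext p
    simp only [mem_inter_iff, mem_preimage, mem_Iic, mem_Ioo, and_congr_left_iff]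
    intro hp
    rw [genInv_le_iff hp.1 hp.2]
  rw [hset]
  have h0 : (0:ℝ) ≤ (μ (Iic a)).toReal := ENNReal.toReal_nonneg
  rcases lt_or_ge ((μ (Iic a)).toReal) 1 with h1 | h1
  · have : Iic ((μ (Iic a)).toReal) ∩ Ioo (0:ℝ) 1 = Ioc 0 ((μ (Iic a)).toReal) := by
      ext p
      simp only [mem_inter_iff, mem_Iic, mem_Ioo, mem_Ioc]
      constructor
      · rintro ⟨hpa, hp0, _⟩; exact ⟨hp0, hpa⟩
      · rintro ⟨hp0, hpa⟩; exact ⟨hpa, hp0, lt_of_le_of_lt hpa h1⟩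
    rw [this, Real.volume_Ioc, sub_zero, ENNReal.ofReal_toReal (measure_ne_top μ _)]
  · have h1' : (μ (Iic a)).toReal = 1 := le_antisymm (cdfR_le_one a) h1
    have : Iic ((μ (Iic a)).toReal) ∩ Ioo (0:ℝ) 1 = Ioo 0 1 := by
      rw [h1']
      ext p
      simp only [mem_inter_iff, mem_Iic, mem_Ioo]
      exact ⟨fun h => h.2, fun h => ⟨h.2.le, h⟩⟩
    rw [this, Real.volume_Ioo, sub_zero, ENNReal.ofReal_one]
    have := ENNReal.ofReal_toReal (measure_ne_top μ (Iic a))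
    rw [h1', ENNReal.ofReal_one] at this
    exact this.symm ▸ rfl

lemma integral_comp_genInv {f : ℝ → ℝ} (hf : AEStronglyMeasurable f μ) :
    ∫ y, f y ∂μ = ∫ p in Set.Ioo (0:ℝ) 1, f (genInv μ p) := by
  have h := integral_map (φ := genInv μ) (μ := volume.restrict (Set.Ioo (0:ℝ) 1))
    aemeasurable_genInv (f := f) (by rwa [map_genInv])
  rwa [map_genInv] at h

lemma integrableOn_comp_genInv {f : ℝ → ℝ} (hf : Integrable f μ) :
    IntegrableOn (fun p => f (genInv μ p)) (Set.Ioo (0:ℝ) 1) volume := by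
  have h := (integrable_map_measure (μ := volume.restrict (Set.Ioo (0:ℝ) 1))
    (f := genInv μ) (g := f) (by rw [map_genInv]; exact hf.aestronglyMeasurable)
    aemeasurable_genInv).mp (by rwa [map_genInv])
  exact h

end CS
namespace CS

variable {μ : Measure ℝ} [IsProbabilityMeasure μ] {𝒴 : Set ℝ}

lemma setIntegral_pos {ν : Measure ℝ} {s : Set ℝ} {f : ℝ → ℝ}
    (hf : IntegrableOn f s ν) (hpos : ∀ᵐ x ∂ν.restrict s, 0 < f x)
    (hs : ν s ≠ 0) : 0 < ∫ x in s, f x ∂ν := by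
  have hnn : 0 ≤ᵐ[ν.restrict s] f := hpos.mono fun x hx => hx.le
  rcases lt_or_eq_of_le (setIntegral_nonneg_of_ae_restrict hnn) with h | h
  · exact h
  · exfalso
    have hz : f =ᵐ[ν.restrict s] 0 := (integral_eq_zero_iff_of_nonneg_ae hnn hf).mp h.symm
    have : ∀ᵐ x ∂ν.restrict s, False := by
      filter_upwards [hpos, hz] with x h1 h2
      rw [h2] at h1; exact lt_irrefl 0 h1
    rw [Filter.eventually_false_iff_eq_bot, ae_eq_bot] at this
    apply hs
    have := congrArg (fun m : Measure ℝ => m Set.univ) this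
    simpa [Measure.restrict_apply_univ] using this

lemma mem_of_quantile (h𝒴 : Convex ℝ 𝒴) (hsupp : ∀ᵐ y ∂μ, y ∈ 𝒴) {p w : ℝ}
    (hp0 : 0 < p) (hp1 : p < 1) (hq1 : (μ (Set.Iio w)).toReal ≤ p)
    (hq2 : p ≤ (μ (Set.Iic w)).toReal) : w ∈ 𝒴 := by
  have hco : μ 𝒴ᶜ = 0 := by
    have := ae_iff.mp hsupp
    simpa [Set.compl_def] using this
  have h1 : μ (Set.Iic w ∩ 𝒴) ≠ 0 := by
    rw [measure_inter_conull hco]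
    intro h
    rw [h] at hq2; simp at hq2; linarith
  have h2 : μ (Set.Ici w ∩ 𝒴) ≠ 0 := by
    rw [measure_inter_conull hco]
    intro h
    have hcompl : μ (Set.Iio w) = 1 := by
      have h3 := measure_compl (μ := μ) (s := Set.Ici w) measurableSet_Ici (measure_ne_top μ _)
      rw [h, compl_Ici] at h3
      simpa using h3
    rw [hcompl] at hq1
    simp at hq1; linarith
  obtain ⟨y₁, hy₁w, hy₁⟩ := nonempty_of_measure_ne_zero h1
  obtain ⟨y₂, hy₂w, hy₂⟩ := nonempty_of_measure_ne_zero h2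
  exact h𝒴.ordConnected.out hy₁ hy₂ ⟨hy₁w, hy₂w⟩

lemma genInv_mem (h𝒴 : Convex ℝ 𝒴) (hsupp : ∀ᵐ y ∂μ, y ∈ 𝒴) {p : ℝ}
    (hp0 : 0 < p) (hp1 : p < 1) : genInv μ p ∈ 𝒴 :=
  mem_of_quantile h𝒴 hsupp hp0 hp1 (cdfR_Iio_genInv_le hp0 hp1) (le_cdfR_genInv hp0 hp1)

end CS
namespace CS

variable {μ : Measure ℝ} [IsProbabilityMeasure μ] {𝒴 : Set ℝ} {τ : ℝ}

lemma intOn_const {c a b : ℝ} : IntegrableOn (fun _ : ℝ => c) (Set.Ioo a b) volume :=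
  integrableOn_const (by simp [Real.volume_Ioo])

lemma vol_Ioo_toReal {a b : ℝ} (h : a ≤ b) : volume.real (Set.Ioo a b) = b - a := by
  simp [Measure.real, Real.volume_Ioo, ENNReal.toReal_ofReal (by linarith : (0:ℝ) ≤ b - a)]

lemma integrableOn_genInv (hY : Integrable (fun y : ℝ => y) μ) :
    IntegrableOn (genInv μ) (Set.Ioo (0:ℝ) 1) volume :=
  integrableOn_comp_genInv (f := fun y => y) hY

lemma genInv_le_of_quantile {v' p : ℝ} (hq2 : τ ≤ (μ (Set.Iic v')).toReal)
    (hp0 : 0 < p) (hp1 : p < 1) (hpτ : p ≤ τ) : genInv μ p ≤ v' :=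
  (genInv_le_iff hp0 hp1).mpr (hpτ.trans hq2)

lemma le_genInv_of_quantile {v' p : ℝ} (hq1 : (μ (Set.Iio v')).toReal ≤ τ)
    (hp1 : p < 1) (hτp : τ < p) : v' ≤ genInv μ p := by
  by_contra h
  push_neg at h
  obtain ⟨y, hyv, hy⟩ := genInv_lt_imp hp1 h
  have hle : (μ (Set.Iic y)).toReal ≤ (μ (Set.Iio v')).toReal :=
    ENNReal.toReal_mono (measure_ne_top μ _)
      (measure_mono (fun z hz => lt_of_le_of_lt hz hyv))
  linarith

lemma ESminus_int (hτ0 : (0:ℝ) < τ) :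
    ∫ p in Set.Ioo (0:ℝ) τ, genInv μ p = τ * ESminus μ τ := by
  rw [ESminus, ← integral_Ioc_eq_integral_Ioo, one_div, ← mul_assoc,
    mul_inv_cancel₀ hτ0.ne', one_mul]

lemma ESplus_int (hτ1 : τ < 1) :
    ∫ p in Set.Ioo τ (1:ℝ), genInv μ p = (1 - τ) * ESplus μ τ := by
  rw [ESplus, ← integral_Ioc_eq_integral_Ioo, one_div, ← mul_assoc,
    mul_inv_cancel₀ (by linarith : (1:ℝ) - τ ≠ 0), one_mul]

lemma intOn_Ioc_genInv (hY : Integrable (fun y : ℝ => y) μ) (hτ : τ ∈ Set.Ioo (0:ℝ) 1) :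
    IntegrableOn (genInv μ) (Set.Ioc (0:ℝ) τ) volume := by
  have h1 : IntegrableOn (genInv μ) (Set.Ioo (0:ℝ) τ) volume :=
    (integrableOn_genInv hY).mono_set (Set.Ioo_subset_Ioo le_rfl hτ.2.le)
  exact h1.congr_set_ae Ioo_ae_eq_Ioc.symm

lemma ESminus_mem (h𝒴 : Convex ℝ 𝒴) (hsupp : ∀ᵐ y ∂μ, y ∈ 𝒴)
    (hY : Integrable (fun y : ℝ => y) μ) (hτ : τ ∈ Set.Ioo (0:ℝ) 1) :
    ESminus μ τ ∈ 𝒴 := by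
  obtain ⟨hτ0, hτ1⟩ := hτ
  set c := genInv μ τ with hcdef
  have hc : c ∈ 𝒴 := genInv_mem h𝒴 hsupp hτ0 hτ1
  have hI : IntegrableOn (genInv μ) (Set.Ioo (0:ℝ) τ) volume :=
    (integrableOn_genInv hY).mono_set (Set.Ioo_subset_Ioo le_rfl hτ1.le)
  have hIoo : ∫ p in Set.Ioo (0:ℝ) τ, genInv μ p = τ * ESminus μ τ := ESminus_int hτ0
  have hub : ESminus μ τ ≤ c := by
    have hle : ∫ p in Set.Ioo (0:ℝ) τ, genInv μ p ≤ ∫ _ in Set.Ioo (0:ℝ) τ, c := by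
      refine setIntegral_mono_on hI intOn_const measurableSet_Ioo ?_
      intro p hp
      exact monotoneOn_genInv ⟨hp.1, hp.2.trans hτ1⟩ ⟨hτ0, hτ1⟩ hp.2.le
    rw [hIoo, setIntegral_const, smul_eq_mul, vol_Ioo_toReal hτ0.le, sub_zero] at hle
    exact (mul_le_mul_iff_right₀ hτ0).mp hle
  rcases eq_or_lt_of_le hub with heq | hlt
  · rw [heq]; exact hc
  · by_contra hnot
    have hall : ∀ p ∈ Set.Ioo (0:ℝ) τ, ESminus μ τ < genInv μ p := by
      intro p hp
      by_contra hle
      push_neg at hle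
      exact hnot (h𝒴.ordConnected.out
        (genInv_mem h𝒴 hsupp hp.1 (hp.2.trans hτ1)) hc ⟨hle, hub⟩)
    have hpos : 0 < ∫ p in Set.Ioo (0:ℝ) τ, (genInv μ p - ESminus μ τ) := by
      refine setIntegral_pos (hI.sub intOn_const) ?_ ?_
      · filter_upwards [ae_restrict_mem measurableSet_Ioo] with p hp
        have := hall p hp; linarith
      · simp only [Real.volume_Ioo]
        rw [Ne, ENNReal.ofReal_eq_zero]
        push_neg; linarith
    have hzero : ∫ p in Set.Ioo (0:ℝ) τ, (genInv μ p - ESminus μ τ) = 0 := by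
      rw [integral_sub hI intOn_const, hIoo, setIntegral_const, smul_eq_mul,
        vol_Ioo_toReal hτ0.le, sub_zero]
      ring
    linarith

lemma ESplus_mem (h𝒴 : Convex ℝ 𝒴) (hsupp : ∀ᵐ y ∂μ, y ∈ 𝒴)
    (hY : Integrable (fun y : ℝ => y) μ) (hτ : τ ∈ Set.Ioo (0:ℝ) 1) :
    ESplus μ τ ∈ 𝒴 := by
  obtain ⟨hτ0, hτ1⟩ := hτ
  have h1τ : (0:ℝ) < 1 - τ := by linarith
  set c := genInv μ τ with hcdef
  have hc : c ∈ 𝒴 := genInv_mem h𝒴 hsupp hτ0 hτ1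
  have hI : IntegrableOn (genInv μ) (Set.Ioo τ (1:ℝ)) volume :=
    (integrableOn_genInv hY).mono_set (Set.Ioo_subset_Ioo hτ0.le le_rfl)
  have hIoo : ∫ p in Set.Ioo τ (1:ℝ), genInv μ p = (1-τ) * ESplus μ τ := ESplus_int hτ1
  have hub : c ≤ ESplus μ τ := by
    have hle : ∫ _ in Set.Ioo τ (1:ℝ), c ≤ ∫ p in Set.Ioo τ (1:ℝ), genInv μ p := by
      refine setIntegral_mono_on intOn_const hI measurableSet_Ioo ?_
      intro p hp
      exact monotoneOn_genInv ⟨hτ0, hτ1⟩ ⟨hτ0.trans hp.1, hp.2⟩ hp.1.le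
    rw [hIoo, setIntegral_const, smul_eq_mul, vol_Ioo_toReal hτ1.le] at hle
    exact (mul_le_mul_iff_right₀ h1τ).mp hle
  rcases eq_or_lt_of_le hub with heq | hlt
  · rw [← heq]; exact hc
  · by_contra hnot
    have hall : ∀ p ∈ Set.Ioo τ (1:ℝ), genInv μ p < ESplus μ τ := by
      intro p hp
      by_contra hle
      push_neg at hle
      exact hnot (h𝒴.ordConnected.out hc
        (genInv_mem h𝒴 hsupp (hτ0.trans hp.1) hp.2) ⟨hub, hle⟩)
    have hpos : 0 < ∫ p in Set.Ioo τ (1:ℝ), (ESplus μ τ - genInv μ p) := by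
      refine setIntegral_pos (intOn_const.sub hI) ?_ ?_
      · filter_upwards [ae_restrict_mem measurableSet_Ioo] with p hp
        have := hall p hp; linarith
      · simp only [Real.volume_Ioo]
        rw [Ne, ENNReal.ofReal_eq_zero]
        push_neg; linarith
    have hzero : ∫ p in Set.Ioo τ (1:ℝ), (ESplus μ τ - genInv μ p) = 0 := by
      rw [integral_sub intOn_const hI, hIoo, setIntegral_const, smul_eq_mul,
        vol_Ioo_toReal hτ1.le]
      ring
    linarith

end CS
namespace CS

variable {μ : Measure ℝ} [IsProbabilityMeasure μ] {𝒴 : Set ℝ} {τ : ℝ}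

lemma mean_split (hY : Integrable (fun y : ℝ => y) μ) (hτ : τ ∈ Set.Ioo (0:ℝ) 1) :
    ∫ y, y ∂μ = τ * ESminus μ τ + (1 - τ) * ESplus μ τ := by
  obtain ⟨hτ0, hτ1⟩ := hτ
  have h1 : ∫ y, y ∂μ = ∫ p in Set.Ioo (0:ℝ) 1, genInv μ p :=
    integral_comp_genInv (f := fun y => y) hY.aestronglyMeasurable
  have hsplit : Set.Ioc (0:ℝ) τ ∪ Set.Ioo τ 1 = Set.Ioo (0:ℝ) 1 :=
    Set.Ioc_union_Ioo_eq_Ioo hτ0.le hτ1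
  have hdisj : Disjoint (Set.Ioc (0:ℝ) τ) (Set.Ioo τ 1) := by
    rw [Set.disjoint_left]
    rintro p ⟨_, h1p⟩ ⟨h2p, _⟩
    exact absurd h1p (not_le.2 h2p)
  have hI1 : IntegrableOn (genInv μ) (Set.Ioc (0:ℝ) τ) volume :=
    intOn_Ioc_genInv hY ⟨hτ0, hτ1⟩
  have hI2 : IntegrableOn (genInv μ) (Set.Ioo τ (1:ℝ)) volume :=
    (integrableOn_genInv hY).mono_set (Set.Ioo_subset_Ioo hτ0.le le_rfl)
  rw [h1, ← hsplit, setIntegral_union hdisj measurableSet_Ioo hI1 hI2,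
    integral_Ioc_eq_integral_Ioo, ESminus_int hτ0, ESplus_int hτ1]

lemma max_integral (hY : Integrable (fun y : ℝ => y) μ) (hτ : τ ∈ Set.Ioo (0:ℝ) 1)
    {v' : ℝ} (hq1 : (μ (Set.Iio v')).toReal ≤ τ) (hq2 : τ ≤ (μ (Set.Iic v')).toReal) :
    ∫ y, max (v' - y) 0 ∂μ = τ * v' - τ * ESminus μ τ := by
  obtain ⟨hτ0, hτ1⟩ := hτ
  have hfint : Integrable (fun y : ℝ => max (v' - y) 0) μ :=
    ((integrable_const v').sub hY).pos_part
  have h1 : ∫ y, max (v' - y) 0 ∂μ = ∫ p in Set.Ioo (0:ℝ) 1, max (v' - genInv μ p) 0 :=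
    integral_comp_genInv (f := fun y => max (v' - y) 0) hfint.aestronglyMeasurable
  have hsplit : Set.Ioc (0:ℝ) τ ∪ Set.Ioo τ 1 = Set.Ioo (0:ℝ) 1 :=
    Set.Ioc_union_Ioo_eq_Ioo hτ0.le hτ1
  have hdisj : Disjoint (Set.Ioc (0:ℝ) τ) (Set.Ioo τ 1) := by
    rw [Set.disjoint_left]
    rintro p ⟨_, h1p⟩ ⟨h2p, _⟩
    exact absurd h1p (not_le.2 h2p)
  have hIfull : IntegrableOn (fun p => max (v' - genInv μ p) 0) (Set.Ioo (0:ℝ) 1) volume :=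
    integrableOn_comp_genInv (f := fun y => max (v' - y) 0) hfint
  have hI1 : IntegrableOn (fun p => max (v' - genInv μ p) 0) (Set.Ioc (0:ℝ) τ) volume := by
    have := (hIfull.mono_set (Set.Ioo_subset_Ioo le_rfl hτ1.le))
    exact this.congr_set_ae Ioo_ae_eq_Ioc.symm
  have hI2 : IntegrableOn (fun p => max (v' - genInv μ p) 0) (Set.Ioo τ (1:ℝ)) volume :=
    hIfull.mono_set (Set.Ioo_subset_Ioo hτ0.le le_rfl)
  rw [h1, ← hsplit, setIntegral_union hdisj measurableSet_Ioo hI1 hI2]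
  have e2 : ∫ p in Set.Ioo τ (1:ℝ), max (v' - genInv μ p) 0 = 0 := by
    rw [setIntegral_congr_fun measurableSet_Ioo (g := fun _ => (0:ℝ))]
    · simp
    · intro p hp
      have := le_genInv_of_quantile hq1 hp.2 hp.1
      simp only [max_eq_right (by linarith : v' - genInv μ p ≤ 0)]
  have e1 : ∫ p in Set.Ioc (0:ℝ) τ, max (v' - genInv μ p) 0
      = τ * v' - τ * ESminus μ τ := by
    rw [setIntegral_congr_fun measurableSet_Ioc (g := fun p => v' - genInv μ p)]
    · rw [integral_Ioc_eq_integral_Ioo,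
        integral_sub intOn_const ((integrableOn_genInv hY).mono_set
          (Set.Ioo_subset_Ioo le_rfl hτ1.le)),
        ESminus_int hτ0, setIntegral_const, smul_eq_mul, vol_Ioo_toReal hτ0.le, sub_zero]
    · intro p hp
      have := genInv_le_of_quantile hq2 hp.1 (lt_of_le_of_lt hp.2 hτ1) hp.2
      simp only [max_eq_left (by linarith : (0:ℝ) ≤ v' - genInv μ p)]
  rw [e1, e2]
  ring

end CS
namespace CS

noncomputable def pinf (τ : ℝ) (G : ℝ → ℝ) (v : ℝ) (y : ℝ) : ℝ :=
  (G y - G v) * (τ - if y ≤ v then 1 else 0)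

variable {μ : Measure ℝ} [IsProbabilityMeasure μ] {𝒴 : Set ℝ} {τ : ℝ}

lemma ind_eq (v : ℝ) : (fun y : ℝ => if y ≤ v then (1:ℝ) else 0)
    = (Set.Iic v).indicator (fun _ => (1:ℝ)) := by
  ext y; simp [Set.indicator_apply]

lemma sind_eq (v : ℝ) : (fun y : ℝ => if y < v then (1:ℝ) else 0)
    = (Set.Iio v).indicator (fun _ => (1:ℝ)) := by
  ext y; simp [Set.indicator_apply]

lemma int_ind (v : ℝ) : Integrable (fun y : ℝ => if y ≤ v then (1:ℝ) else 0) μ := by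
  rw [ind_eq]
  exact (integrable_const 1).indicator measurableSet_Iic

lemma int_sind (v : ℝ) : Integrable (fun y : ℝ => if y < v then (1:ℝ) else 0) μ := by
  rw [sind_eq]
  exact (integrable_const 1).indicator measurableSet_Iio

lemma integral_ind (v : ℝ) : ∫ y, (if y ≤ v then (1:ℝ) else 0) ∂μ = (μ (Set.Iic v)).toReal := by
  rw [ind_eq]
  simpa [Measure.real] using integral_indicator_one (μ := μ) measurableSet_Iic

lemma integral_sind (v : ℝ) : ∫ y, (if y < v then (1:ℝ) else 0) ∂μ = (μ (Set.Iio v)).toReal := by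
  rw [sind_eq]
  simpa [Measure.real] using integral_indicator_one (μ := μ) measurableSet_Iio

lemma int_pinf {G : ℝ → ℝ} (hG : Integrable G μ) (v : ℝ) : Integrable (pinf τ G v) μ := by
  have h1 : Integrable (fun y => (τ - if y ≤ v then (1:ℝ) else 0) * (G y - G v)) μ := by
    refine Integrable.bdd_mul (hG.sub (integrable_const (G v))) ?_ (c := |τ| + 1) (Filter.Eventually.of_forall fun y => ?_)
    · refine (Measurable.aestronglyMeasurable ?_)
      exact measurable_const.sub
        (Measurable.ite (measurableSet_Iic) measurable_const measurable_const)
    · by_cases h : y ≤ v <;> simp [h, abs_le] <;> cases abs_le.1 (le_refl |τ|) <;>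
        constructor <;> cases le_or_gt 0 τ <;> simp [abs_of_nonneg, abs_of_neg, *] <;> linarith
  exact h1.congr (Filter.Eventually.of_forall fun y => by rw [pinf]; ring)

lemma pinf_strict (G : ℝ → ℝ) (a y : ℝ) :
    pinf τ G a y = (G y - G a) * (τ - if y < a then 1 else 0) := by
  rcases lt_trichotomy y a with h | h | h
  · simp [pinf, h.le, h]
  · simp [pinf, h]
  · simp [pinf, not_le.2 h, not_lt.2 h.le]

lemma pin_diff_right (G : ℝ → ℝ) (hGint : Integrable G μ) {v v' : ℝ} (hvv : v' ≤ v) :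
    ∫ y, pinf τ G v y ∂μ - ∫ y, pinf τ G v' y ∂μ
      = (∫ y in Set.Ioc v' v, (G v - G y) ∂μ)
        + (G v - G v') * ((μ (Set.Iic v')).toReal - τ) := by
  rw [← integral_sub (int_pinf hGint v) (int_pinf hGint v')]
  have hpt : ∀ y, pinf τ G v y - pinf τ G v' y
      = (Set.Ioc v' v).indicator (fun y => G v - G y) y
        + (G v - G v') * ((if y ≤ v' then (1:ℝ) else 0) - τ) := by
    intro y
    by_cases h1 : y ≤ v' <;> by_cases h2 : y ≤ v
    · simp only [pinf, Set.indicator_apply, Set.mem_Ioc, h1, h2, if_true,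
        not_lt.2 h1, false_and, if_false]
      ring
    · exact absurd (h1.trans hvv) h2
    · simp only [pinf, Set.indicator_apply, Set.mem_Ioc, h1, h2, if_true, if_false,
        not_le.1 h1, true_and]
      ring
    · simp only [pinf, Set.indicator_apply, Set.mem_Ioc, h1, h2, if_false, and_false]
      ring
  have hf : Integrable (fun y => (Set.Ioc v' v).indicator (fun z => G v - G z) y) μ := by
    exact ((integrable_const (G v)).sub hGint).indicator measurableSet_Ioc
  have hg : Integrable (fun y => (G v - G v') * ((if y ≤ v' then (1:ℝ) else 0) - τ)) μ := by
    exact ((int_ind v').sub (integrable_const τ)).const_mul (G v - G v')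
  have hsub : ∫ y, ((if y ≤ v' then (1:ℝ) else 0) - τ) ∂μ = (μ (Set.Iic v')).toReal - τ := by
    have := integral_sub (μ := μ) (int_ind v') (integrable_const τ)
    rw [integral_ind, integral_const] at this
    simpa using this
  rw [integral_congr_ae (Filter.Eventually.of_forall hpt), integral_add hf hg,
    integral_indicator measurableSet_Ioc, integral_const_mul, hsub]

lemma pin_diff_left (G : ℝ → ℝ) (hGint : Integrable G μ) {v v' : ℝ} (hvv : v ≤ v') :
    ∫ y, pinf τ G v y ∂μ - ∫ y, pinf τ G v' y ∂μ
      = (∫ y in Set.Ico v v', (G y - G v) ∂μ)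
        + (G v' - G v) * (τ - (μ (Set.Iio v')).toReal) := by
  rw [← integral_sub (int_pinf hGint v) (int_pinf hGint v')]
  have hpt : ∀ y, pinf τ G v y - pinf τ G v' y
      = (Set.Ico v v').indicator (fun y => G y - G v) y
        + (G v' - G v) * (τ - (if y < v' then (1:ℝ) else 0)) := by
    intro y
    rw [pinf_strict, pinf_strict]
    by_cases h1 : y < v <;> by_cases h2 : y < v'
    · simp only [Set.indicator_apply, Set.mem_Ico, h1, h2, if_true, not_le.2 h1,
        false_and, if_false]
      ring
    · exact absurd (lt_of_lt_of_le h1 hvv) h2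
    · simp only [Set.indicator_apply, Set.mem_Ico, h1, h2, if_true, if_false,
        not_lt.1 h1, true_and]
      ring
    · simp only [Set.indicator_apply, Set.mem_Ico, h1, h2, if_false, and_false]
      ring
  have hf : Integrable (fun y => (Set.Ico v v').indicator (fun z => G z - G v) y) μ := by
    exact (hGint.sub (integrable_const (G v))).indicator measurableSet_Ico
  have hg : Integrable (fun y => (G v' - G v) * (τ - (if y < v' then (1:ℝ) else 0))) μ := by
    exact ((integrable_const τ).sub (int_sind v')).const_mul (G v' - G v)
  have hsub : ∫ y, (τ - (if y < v' then (1:ℝ) else 0)) ∂μ = τ - (μ (Set.Iio v')).toReal := by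
    have := integral_sub (μ := μ) (integrable_const τ) (int_sind v')
    rw [integral_sind, integral_const] at this
    simpa using this
  rw [integral_congr_ae (Filter.Eventually.of_forall hpt), integral_add hf hg,
    integral_indicator measurableSet_Ico, integral_const_mul, hsub]

end CS
namespace CS

variable {μ : Measure ℝ} [IsProbabilityMeasure μ] {𝒴 : Set ℝ} {τ : ℝ}

lemma pin_gap (hτ : τ ∈ Set.Ioo (0:ℝ) 1) (h𝒴 : Convex ℝ 𝒴) (hsupp : ∀ᵐ y ∂μ, y ∈ 𝒴)
    {G : ℝ → ℝ} (hGmono : StrictMonoOn G 𝒴) (hGint : Integrable G μ) {v v' : ℝ}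
    (hv : v ∈ 𝒴) (hq1 : (μ (Set.Iio v')).toReal ≤ τ) (hq2 : τ ≤ (μ (Set.Iic v')).toReal) :
    (∫ y, pinf τ G v' y ∂μ ≤ ∫ y, pinf τ G v y ∂μ) ∧
    (¬((μ (Set.Iio v)).toReal ≤ τ ∧ τ ≤ (μ (Set.Iic v)).toReal) →
      ∫ y, pinf τ G v' y ∂μ < ∫ y, pinf τ G v y ∂μ) := by
  have hv'𝒴 : v' ∈ 𝒴 := mem_of_quantile h𝒴 hsupp hτ.1 hτ.2 hq1 hq2
  have hGm : MonotoneOn G 𝒴 := hGmono.monotoneOn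
  rcases le_or_gt v' v with hvv | hvv
  · -- v' ≤ v
    have hD := pin_diff_right (μ := μ) (τ := τ) G hGint hvv
    have hT1 : 0 ≤ ∫ y in Set.Ioc v' v, (G v - G y) ∂μ := by
      refine setIntegral_nonneg_of_ae_restrict ?_
      filter_upwards [ae_restrict_mem measurableSet_Ioc, ae_restrict_of_ae hsupp]
        with y hy hy𝒴
      exact sub_nonneg.2 (hGm hy𝒴 hv hy.2)
    have hT2 : 0 ≤ (G v - G v') * ((μ (Set.Iic v')).toReal - τ) :=
      mul_nonneg (sub_nonneg.2 (hGm hv'𝒴 hv hvv)) (sub_nonneg.2 hq2)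
    refine ⟨by linarith, fun hnot => ?_⟩
    have hIc : τ ≤ (μ (Set.Iic v)).toReal := hq2.trans (cdfR_mono hvv)
    have hlt : τ < (μ (Set.Iio v)).toReal := by
      by_contra h
      push_neg at h
      exact hnot ⟨h, hIc⟩
    have hv'v : v' < v := by
      rcases eq_or_lt_of_le hvv with h | h
      · exfalso; rw [h] at hq1; linarith
      · exact h
    by_cases hm : μ (Set.Ioo v' v) = 0
    · have hmeq : μ (Set.Iio v) = μ (Set.Iic v') := by
        refine le_antisymm ?_ (measure_mono (fun z hz => lt_of_le_of_lt hz hv'v))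
        calc μ (Set.Iio v) ≤ μ (Set.Iic v' ∪ Set.Ioo v' v) := by
              refine measure_mono (fun z hz => ?_)
              rcases le_or_gt z v' with h | h
              · exact Or.inl h
              · exact Or.inr ⟨h, hz⟩
        _ ≤ μ (Set.Iic v') + μ (Set.Ioo v' v) := measure_union_le _ _
        _ = μ (Set.Iic v') := by rw [hm, add_zero]
      have : τ < (μ (Set.Iic v')).toReal := by rw [← hmeq]; exact hlt
      have hT2' : 0 < (G v - G v') * ((μ (Set.Iic v')).toReal - τ) :=
        mul_pos (sub_pos.2 (hGmono hv'𝒴 hv hv'v)) (by linarith)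
      linarith
    · have hpos : 0 < ∫ y in Set.Ioo v' v, (G v - G y) ∂μ := by
        refine setIntegral_pos (((integrable_const (G v)).sub hGint).integrableOn) ?_ hm
        filter_upwards [ae_restrict_mem measurableSet_Ioo, ae_restrict_of_ae hsupp]
          with y hy hy𝒴
        exact sub_pos.2 (hGmono hy𝒴 hv hy.2)
      have hmono' : ∫ y in Set.Ioo v' v, (G v - G y) ∂μ
          ≤ ∫ y in Set.Ioc v' v, (G v - G y) ∂μ := by
        refine setIntegral_mono_set (((integrable_const (G v)).sub hGint).integrableOn) ?_
          (HasSubset.Subset.eventuallyLE Set.Ioo_subset_Ioc_self)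
        filter_upwards [ae_restrict_mem measurableSet_Ioc, ae_restrict_of_ae hsupp]
          with y hy hy𝒴
        exact sub_nonneg.2 (hGm hy𝒴 hv hy.2)
      linarith
  · -- v < v'
    have hD := pin_diff_left (μ := μ) (τ := τ) G hGint hvv.le
    have hT1 : 0 ≤ ∫ y in Set.Ico v v', (G y - G v) ∂μ := by
      refine setIntegral_nonneg_of_ae_restrict ?_
      filter_upwards [ae_restrict_mem measurableSet_Ico, ae_restrict_of_ae hsupp]
        with y hy hy𝒴
      exact sub_nonneg.2 (hGm hv hy𝒴 hy.1)
    have hT2 : 0 ≤ (G v' - G v) * (τ - (μ (Set.Iio v')).toReal) :=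
      mul_nonneg (sub_nonneg.2 (hGm hv hv'𝒴 hvv.le)) (sub_nonneg.2 hq1)
    refine ⟨by linarith, fun hnot => ?_⟩
    have hIo : (μ (Set.Iio v)).toReal ≤ τ :=
      le_trans (ENNReal.toReal_mono (measure_ne_top μ _)
        (measure_mono (Set.Iio_subset_Iio hvv.le))) hq1
    have hlt : (μ (Set.Iic v)).toReal < τ := by
      by_contra h
      push_neg at h
      exact hnot ⟨hIo, h⟩
    by_cases hm : μ (Set.Ioo v v') = 0
    · have hmeq : μ (Set.Iio v') = μ (Set.Iic v) := by
        refine le_antisymm ?_ (measure_mono (fun z hz => lt_of_le_of_lt hz hvv))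
        calc μ (Set.Iio v') ≤ μ (Set.Iic v ∪ Set.Ioo v v') := by
              refine measure_mono (fun z hz => ?_)
              rcases le_or_gt z v with h | h
              · exact Or.inl h
              · exact Or.inr ⟨h, hz⟩
        _ ≤ μ (Set.Iic v) + μ (Set.Ioo v v') := measure_union_le _ _
        _ = μ (Set.Iic v) := by rw [hm, add_zero]
      have : (μ (Set.Iio v')).toReal < τ := by rw [hmeq]; exact hlt
      have hT2' : 0 < (G v' - G v) * (τ - (μ (Set.Iio v')).toReal) :=
        mul_pos (sub_pos.2 (hGmono hv hv'𝒴 hvv)) (by linarith)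
      linarith
    · have hpos : 0 < ∫ y in Set.Ioo v v', (G y - G v) ∂μ := by
        refine setIntegral_pos ((hGint.sub (integrable_const (G v))).integrableOn) ?_ hm
        filter_upwards [ae_restrict_mem measurableSet_Ioo, ae_restrict_of_ae hsupp]
          with y hy hy𝒴
        exact sub_pos.2 (hGmono hv hy𝒴 hy.1)
      have hmono' : ∫ y in Set.Ioo v v', (G y - G v) ∂μ
          ≤ ∫ y in Set.Ico v v', (G y - G v) ∂μ := by
        refine setIntegral_mono_set ((hGint.sub (integrable_const (G v))).integrableOn) ?_
          (HasSubset.Subset.eventuallyLE Set.Ioo_subset_Ico_self)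
        filter_upwards [ae_restrict_mem measurableSet_Ico, ae_restrict_of_ae hsupp]
          with y hy hy𝒴
        exact sub_nonneg.2 (hGm hv hy𝒴 hy.1)
      linarith

end CS
theorem compositeScore_strictly_consistent
    (τ : ℝ) (hτ : τ ∈ Set.Ioo (0:ℝ) 1)
    (𝒴 : Set ℝ) (h𝒴 : Convex ℝ 𝒴)
    (μ : Measure ℝ) [IsProbabilityMeasure μ]
    (hsupp : ∀ᵐ y ∂μ, y ∈ 𝒴)
    (hY : Integrable (fun y : ℝ => y) μ)
    (g : ℝ → ℝ) (Φ Φ₁ Φ₂ : ℝ → ℝ → ℝ)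
    (hΦstrict : ∀ a ∈ 𝒴, ∀ b ∈ 𝒴, ∀ c ∈ 𝒴, ∀ d ∈ 𝒴, (a, b) ≠ (c, d) →
      Φ a b + Φ₁ a b * (c - a) + Φ₂ a b * (d - b) < Φ c d)
    (hG : ∀ em ∈ 𝒴, ∀ ep ∈ 𝒴, StrictMonoOn
      (fun v => g v + (1/τ) * Φ₁ em ep * v - (1/(1-τ)) * Φ₂ em ep * v) 𝒴)
    (hg : Integrable (fun y => g y) μ)
    (hΦ : Integrable (fun y => Φ y y) μ) :
    (∀ v' ∈ quantileSet μ τ, ∀ em ∈ 𝒴, ∀ v ∈ 𝒴, ∀ ep ∈ 𝒴,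
      ∫ y, compositeScore g Φ Φ₁ Φ₂ τ y (ESminus μ τ) v' (ESplus μ τ) ∂μ ≤
        ∫ y, compositeScore g Φ Φ₁ Φ₂ τ y em v ep ∂μ) ∧
    (∀ v' ∈ quantileSet μ τ, ∀ em ∈ 𝒴, ∀ v ∈ 𝒴, ∀ ep ∈ 𝒴,
      ∫ y, compositeScore g Φ Φ₁ Φ₂ τ y em v ep ∂μ =
        ∫ y, compositeScore g Φ Φ₁ Φ₂ τ y (ESminus μ τ) v' (ESplus μ τ) ∂μ →
      em = ESminus μ τ ∧ v ∈ quantileSet μ τ ∧ ep = ESplus μ τ) := by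
  obtain ⟨hτ0, hτ1⟩ := hτ
  have hτ0' : τ ≠ 0 := hτ0.ne'
  have h1τ : (0:ℝ) < 1 - τ := by linarith
  have h1τ' : (1:ℝ) - τ ≠ 0 := h1τ.ne'
  set E₁ := ESminus μ τ with hE₁
  set E₂ := ESplus μ τ with hE₂
  have hEm𝒴 : E₁ ∈ 𝒴 := CS.ESminus_mem h𝒴 hsupp hY ⟨hτ0, hτ1⟩
  have hEp𝒴 : E₂ ∈ 𝒴 := CS.ESplus_mem h𝒴 hsupp hY ⟨hτ0, hτ1⟩
  set m := ∫ y, y ∂μ with hmdef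
  set CΦ := ∫ y, Φ y y ∂μ with hCΦ
  have hmean : m = τ * E₁ + (1 - τ) * E₂ := CS.mean_split hY ⟨hτ0, hτ1⟩
  set Gf : ℝ → ℝ → ℝ → ℝ :=
    fun em ep x => g x + 1/τ * Φ₁ em ep * x - 1/(1-τ) * Φ₂ em ep * x with hGf
  have hGfint : ∀ em ep, Integrable (Gf em ep) μ := fun em ep => by
    exact (hg.add (hY.const_mul (1/τ * Φ₁ em ep))).sub (hY.const_mul (1/(1-τ) * Φ₂ em ep))
  have hGfmono : ∀ em ∈ 𝒴, ∀ ep ∈ 𝒴, StrictMonoOn (Gf em ep) 𝒴 := fun em hem ep hep => by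
    exact hG em hem ep hep
  -- the "rest" integrand
  have hrest_int : ∀ em ep, Integrable
      (fun y => Φ₁ em ep * (em - y) + Φ₂ em ep * (ep - y) - Φ em ep + Φ y y) μ :=
    fun em ep => by
      exact (((((integrable_const em).sub hY).const_mul (Φ₁ em ep)).add
        (((integrable_const ep).sub hY).const_mul (Φ₂ em ep))).sub
          (integrable_const (Φ em ep))).add hΦ
  have hrest_val : ∀ em ep,
      ∫ y, (Φ₁ em ep * (em - y) + Φ₂ em ep * (ep - y) - Φ em ep + Φ y y) ∂μ
        = Φ₁ em ep * (em - m) + Φ₂ em ep * (ep - m) - Φ em ep + CΦ := fun em ep => by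
    have i1 : Integrable (fun y => Φ₁ em ep * (em - y)) μ := by
      exact ((integrable_const em).sub hY).const_mul (Φ₁ em ep)
    have i2 : Integrable (fun y => Φ₂ em ep * (ep - y)) μ := by
      exact ((integrable_const ep).sub hY).const_mul (Φ₂ em ep)
    have i12 : Integrable (fun y => Φ₁ em ep * (em - y) + Φ₂ em ep * (ep - y)) μ := by
      exact i1.add i2
    have i123 : Integrable
        (fun y => Φ₁ em ep * (em - y) + Φ₂ em ep * (ep - y) - Φ em ep) μ := by
      exact i12.sub (integrable_const _)
    rw [integral_add i123 hΦ, integral_sub i12 (integrable_const _),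
      integral_add i1 i2, integral_const_mul, integral_const_mul,
      integral_sub (integrable_const em) hY, integral_sub (integrable_const ep) hY]
    simp only [integral_const, Measure.real, measure_univ, ENNReal.toReal_one, smul_eq_mul, one_mul,
      ← hmdef, ← hCΦ]
  have expand : ∀ em ep v, ∫ y, compositeScore g Φ Φ₁ Φ₂ τ y em v ep ∂μ
      = (∫ y, CS.pinf τ (Gf em ep) v y ∂μ)
        + (Φ₁ em ep * (em - m) + Φ₂ em ep * (ep - m) - Φ em ep + CΦ) := by
    intro em ep v
    have hpt : ∀ y, compositeScore g Φ Φ₁ Φ₂ τ y em v ep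
        = CS.pinf τ (Gf em ep) v y
          + (Φ₁ em ep * (em - y) + Φ₂ em ep * (ep - y) - Φ em ep + Φ y y) := by
      intro y
      by_cases h : y ≤ v
      · simp only [compositeScore, Sminus, Splus, CS.pinf, hGf, if_pos h,
          if_neg (not_lt.2 h)]
        field_simp
        ring
      · simp only [compositeScore, Sminus, Splus, CS.pinf, hGf, if_neg h,
          if_pos (not_le.1 h)]
        field_simp
        ring
    rw [integral_congr_ae (Filter.Eventually.of_forall hpt),
      integral_add (CS.int_pinf (hGfint em ep) v) (hrest_int em ep), hrest_val em ep]
  have hW : ∀ v' : ℝ, (μ (Set.Iio v')).toReal ≤ τ → τ ≤ (μ (Set.Iic v')).toReal →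
      ∫ y, CS.pinf τ (fun x : ℝ => x) v' y ∂μ = τ * (m - E₁) := by
    intro v' hq1 hq2
    have hpt : ∀ y, CS.pinf τ (fun x : ℝ => x) v' y = τ * (y - v') + max (v' - y) 0 := by
      intro y
      by_cases h : y ≤ v'
      · simp only [CS.pinf, if_pos h, max_eq_left (by linarith : (0:ℝ) ≤ v' - y)]
        ring
      · push_neg at h
        simp only [CS.pinf, if_neg (not_le.2 h),
          max_eq_right (by linarith : v' - y ≤ 0)]
        ring
    have j1 : Integrable (fun y => τ * (y - v')) μ := by
      exact (hY.sub (integrable_const v')).const_mul τ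
    have j2 : Integrable (fun y : ℝ => max (v' - y) 0) μ := by
      exact ((integrable_const v').sub hY).pos_part
    rw [integral_congr_ae (Filter.Eventually.of_forall hpt),
      integral_add j1 j2,
      integral_const_mul, integral_sub hY (integrable_const v'),
      CS.max_integral hY ⟨hτ0, hτ1⟩ hq1 hq2, integral_const]
    simp only [Measure.real, measure_univ, ENNReal.toReal_one, smul_eq_mul, one_mul]
    rw [hE₁]
    ring
  have hPinDec : ∀ em ep (w : ℝ), ∫ y, CS.pinf τ (Gf em ep) w y ∂μ
      = (∫ y, CS.pinf τ g w y ∂μ)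
        + (1/τ * Φ₁ em ep - 1/(1-τ) * Φ₂ em ep) * ∫ y, CS.pinf τ (fun x : ℝ => x) w y ∂μ := by
    intro em ep w
    have hpt : ∀ y, CS.pinf τ (Gf em ep) w y
        = CS.pinf τ g w y
          + (1/τ * Φ₁ em ep - 1/(1-τ) * Φ₂ em ep) * CS.pinf τ (fun x : ℝ => x) w y := by
      intro y
      simp only [CS.pinf, hGf]
      ring
    have j2 : Integrable (fun y =>
        (1/τ * Φ₁ em ep - 1/(1-τ) * Φ₂ em ep) * CS.pinf τ (fun x : ℝ => x) w y) μ := by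
      exact (CS.int_pinf hY w).const_mul _
    rw [integral_congr_ae (Filter.Eventually.of_forall hpt),
      integral_add (CS.int_pinf hg w) j2, integral_const_mul]
  have hdiff : ∀ v', v' ∈ quantileSet μ τ → ∀ em ep v,
      (∫ y, compositeScore g Φ Φ₁ Φ₂ τ y em v ep ∂μ)
        - (∫ y, compositeScore g Φ Φ₁ Φ₂ τ y E₁ v' E₂ ∂μ)
      = ((∫ y, CS.pinf τ (Gf em ep) v y ∂μ) - (∫ y, CS.pinf τ (Gf em ep) v' y ∂μ))
        + (Φ E₁ E₂ - Φ em ep - Φ₁ em ep * (E₁ - em) - Φ₂ em ep * (E₂ - ep)) := by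
    intro v' hv' em ep v
    obtain ⟨hq1, hq2⟩ := hv'
    rw [expand em ep v, expand E₁ E₂ v', hPinDec em ep v', hPinDec E₁ E₂ v',
      hW v' hq1 hq2, hmean]
    field_simp
    ring
  have hBnonneg : ∀ em ∈ 𝒴, ∀ ep ∈ 𝒴,
      0 ≤ Φ E₁ E₂ - Φ em ep - Φ₁ em ep * (E₁ - em) - Φ₂ em ep * (E₂ - ep) := by
    intro em hem ep hep
    by_cases hpair : em = E₁ ∧ ep = E₂
    · obtain ⟨h1, h2⟩ := hpair
      rw [h1, h2]
      have : Φ E₁ E₂ - Φ E₁ E₂ - Φ₁ E₁ E₂ * (E₁ - E₁) - Φ₂ E₁ E₂ * (E₂ - E₂) = 0 := by ring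
      linarith
    · have hne : (em, ep) ≠ (E₁, E₂) := by
        simp only [Ne, Prod.mk.injEq]
        tauto
      have := hΦstrict em hem ep hep E₁ hEm𝒴 E₂ hEp𝒴 hne
      linarith
  constructor
  · intro v' hv' em hem v hvm ep hep
    have hgap := (CS.pin_gap ⟨hτ0, hτ1⟩ h𝒴 hsupp (hGfmono em hem ep hep)
      (hGfint em ep) hvm hv'.1 hv'.2).1
    have hB := hBnonneg em hem ep hep
    have hd := hdiff v' hv' em ep v
    linarith
  · intro v' hv' em hem v hvm ep hep heq
    have hgap := CS.pin_gap ⟨hτ0, hτ1⟩ h𝒴 hsupp (hGfmono em hem ep hep)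
      (hGfint em ep) hvm hv'.1 hv'.2
    have hB := hBnonneg em hem ep hep
    have hd := hdiff v' hv' em ep v
    rw [heq] at hd
    have h0 : ((∫ y, CS.pinf τ (Gf em ep) v y ∂μ) - (∫ y, CS.pinf τ (Gf em ep) v' y ∂μ))
        + (Φ E₁ E₂ - Φ em ep - Φ₁ em ep * (E₁ - em) - Φ₂ em ep * (E₂ - ep)) = 0 := by
      rw [← hd]; ring
    have hD : 0 ≤ (∫ y, CS.pinf τ (Gf em ep) v y ∂μ) - (∫ y, CS.pinf τ (Gf em ep) v' y ∂μ) := by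
      linarith [hgap.1]
    have hpair : em = E₁ ∧ ep = E₂ := by
      by_contra hne
      have hne' : (em, ep) ≠ (E₁, E₂) := by
        simp only [Ne, Prod.mk.injEq]
        tauto
      have := hΦstrict em hem ep hep E₁ hEm𝒴 E₂ hEp𝒴 hne'
      linarith
    refine ⟨hpair.1, ?_, hpair.2⟩
    by_contra hvq
    have hstrict := hgap.2 (fun hc => hvq hc)
    linarith
end
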